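/- arXiv:1707.00812 — 8 statements merged into one kernel-verified Lean document; each statement's English description precedes it below -/
import Mathlib

section
/- Let $X \subseteq \mathbb{R}^m$ and $Y \subseteq \mathbb{R}^n$ be nonempty convex compact sets, let $f : \mathbb{R}^n \times \mathbb{R}^m \to \mathbb{R}$ be convex and differentiable on $Y \times X$, and define the value function $\mathcal{Q}(x) = \inf_{y \in Y} f(y,x)$. Fix $\bar x \in X$ and let $\hat y \in Y$ satisfy $\mathcal{Q}(\bar x) \ge f(\hat y, \bar x) - \varepsilon$. Set $\eta = \max_{y \in Y} \langle \nabla_y f(\hat y, \bar x), \hat y - y \rangle$ and define the affine function $\mathcal{C}(x) = f(\hat y, \bar x) - \eta + \langle \nabla_x f(\hat y, \bar x), x - \bar x \rangle$. Then $\mathcal{Q}(x) \ge \mathcal{C}(x)$ for all $x \in X$, and $\mathcal{Q}(\bar x) - \mathcal{C}(\bar x) \le \eta$. -/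
open Set
open scoped RealInnerProductSpace

/-- Gradient inequality for a convex function on a convex set. -/
lemma grad_ineq_aux {E : Type*} [NormedAddCommGroup E] [NormedSpace ℝ E]
    {s : Set E} {f : E → ℝ} {D : E →L[ℝ] ℝ} {p q : E}
    (hs : ConvexOn ℝ s f) (hp : p ∈ s) (hq : q ∈ s) (hd : HasFDerivAt f D p) :
    f p + D (q - p) ≤ f q := by
  rcases eq_or_ne q p with rfl | hne
  · simp
  · set A : ℝ →ᵃ[ℝ] E := AffineMap.lineMap p q with hA
    have hg : ConvexOn ℝ (A ⁻¹' s) (f ∘ A) := hs.comp_affineMap A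
    have h0 : (0 : ℝ) ∈ A ⁻¹' s := by simp [hA, AffineMap.lineMap_apply_zero, hp]
    have h1 : (1 : ℝ) ∈ A ⁻¹' s := by simp [hA, AffineMap.lineMap_apply_one, hq]
    have hAd : HasDerivAt (fun t : ℝ => A t) (q - p) 0 := by
      have h : HasDerivAt (fun t : ℝ => t • (q - p) + p) ((1:ℝ) • (q - p)) 0 :=
        ((hasDerivAt_id (0:ℝ)).smul_const (q - p)).add_const p
      simpa [hA, AffineMap.lineMap_apply, one_smul] using h
    have hgd : HasDerivAt (f ∘ A) (D (q - p)) 0 := by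
      have hd0 : HasFDerivAt f D (A 0) := by
        rw [hA, AffineMap.lineMap_apply_zero]; exact hd
      exact hd0.comp_hasDerivAt 0 hAd
    have := hg.le_slope_of_hasDerivAt h0 h1 one_pos hgd
    rw [slope_def_field] at this
    simp only [Function.comp, hA, AffineMap.lineMap_apply_zero, AffineMap.lineMap_apply_one] at this
    have : D (q - p) ≤ f q - f p := by simpa using this
    linarith

/-- Inexact cut for the value function of a convex problem with fixed feasible set
(Proposition `fixedprop1`). -/
theorem stmt_0 {n m : ℕ}
    (X : Set (EuclideanSpace ℝ (Fin m))) (Y : Set (EuclideanSpace ℝ (Fin n)))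
    (hXne : X.Nonempty) (hXcv : Convex ℝ X) (hXcp : IsCompact X)
    (hYne : Y.Nonempty) (hYcv : Convex ℝ Y) (hYcp : IsCompact Y)
    (f : EuclideanSpace ℝ (Fin n) × EuclideanSpace ℝ (Fin m) → ℝ)
    -- partial gradients of `f` in `y` and in `x`, and joint differentiability on `Y ×ˢ X`
    (Gy : EuclideanSpace ℝ (Fin n) × EuclideanSpace ℝ (Fin m) → EuclideanSpace ℝ (Fin n))
    (Gx : EuclideanSpace ℝ (Fin n) × EuclideanSpace ℝ (Fin m) → EuclideanSpace ℝ (Fin m))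
    (D : EuclideanSpace ℝ (Fin n) × EuclideanSpace ℝ (Fin m) →
         EuclideanSpace ℝ (Fin n) × EuclideanSpace ℝ (Fin m) →L[ℝ] ℝ)
    (hconv : ConvexOn ℝ (Y ×ˢ X) f)
    (hdiff : ∀ p ∈ Y ×ˢ X, HasFDerivAt f (D p) p)
    (hgrad : ∀ p ∈ Y ×ˢ X, ∀ v, D p v = ⟪Gy p, v.1⟫ + ⟪Gx p, v.2⟫)
    (Q : EuclideanSpace ℝ (Fin m) → ℝ)
    (hQ : ∀ x ∈ X, Q x = sInf ((fun y => f (y, x)) '' Y))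
    (xbar : EuclideanSpace ℝ (Fin m)) (hxbar : xbar ∈ X)
    (ε : ℝ) (hε : 0 ≤ ε)
    (yhat : EuclideanSpace ℝ (Fin n)) (hyhat : yhat ∈ Y)
    (hepsopt : Q xbar ≥ f (yhat, xbar) - ε)
    (η : ℝ)
    (hη : IsGreatest ((fun y => ⟪Gy (yhat, xbar), yhat - y⟫) '' Y) η)
    (C : EuclideanSpace ℝ (Fin m) → ℝ)
    (hC : ∀ x, C x = f (yhat, xbar) - η + ⟪Gx (yhat, xbar), x - xbar⟫) :
    (∀ x ∈ X, Q x ≥ C x) ∧ Q xbar - C xbar ≤ η := by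
  have hpmem : (yhat, xbar) ∈ Y ×ˢ X := ⟨hyhat, hxbar⟩
  -- key pointwise bound: for all y ∈ Y, x ∈ X, f (y, x) ≥ C x
  have key : ∀ x ∈ X, ∀ y ∈ Y, C x ≤ f (y, x) := by
    intro x hx y hy
    have hqmem : ((y, x) : _ × _) ∈ Y ×ˢ X := ⟨hy, hx⟩
    have hgi := grad_ineq_aux hconv hpmem hqmem (hdiff _ hpmem)
    have hD := hgrad _ hpmem ((y, x) - (yhat, xbar))
    have h1 : ((y, x) - (yhat, xbar)).1 = y - yhat := rfl
    have h2 : ((y, x) - (yhat, xbar)).2 = x - xbar := rfl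
    rw [h1, h2] at hD
    have hηy : ⟪Gy (yhat, xbar), yhat - y⟫ ≤ η := hη.2 ⟨y, hy, rfl⟩
    have hyy : -η ≤ ⟪Gy (yhat, xbar), y - yhat⟫ := by
      have : ⟪Gy (yhat, xbar), y - yhat⟫ = -⟪Gy (yhat, xbar), yhat - y⟫ := by
        rw [← inner_neg_right]; congr 1; abel
      linarith [this ▸ neg_le_neg hηy]
    rw [hC x]
    rw [hD] at hgi
    linarith
  constructor
  · intro x hx
    rw [hQ x hx]
    refine le_csInf (hYne.image _) ?_
    rintro b ⟨y, hy, rfl⟩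
    exact key x hx y hy
  · have hbdd : BddBelow ((fun y => f (y, xbar)) '' Y) := by
      refine ⟨C xbar, ?_⟩
      rintro b ⟨y, hy, rfl⟩
      exact key xbar hxbar y hy
    have hQle : Q xbar ≤ f (yhat, xbar) := by
      rw [hQ xbar hxbar]
      exact csInf_le hbdd ⟨yhat, hyhat, rfl⟩
    have hCxbar : C xbar = f (yhat, xbar) - η := by
      rw [hC xbar]; simp
    linarith
end

section
/- Let $Y \subseteq \mathbb{R}^n$ be a nonempty convex compact set, $\bar x \in X$ with $X \subseteq \mathbb{R}^m$ convex compact, and $f$ convex and differentiable on $Y \times X$ with $y \mapsto \nabla_y f(y,x)$ Lipschitz on $Y$ with constant $M_1$ uniformly in $x \in X$. Let $\hat y \in Y$ be $\varepsilon$-optimal for $\mathcal{Q}(\bar x) = \inf_{y \in Y} f(y, \bar x)$, set $\ell = \max_{y\in Y}\langle \nabla_y f(\hat y, \bar x), \hat y - y\rangle$ and $D = \mathrm{Diam}(Y)$. Then $\mathcal{Q}(\bar x) \le f(\hat y, \bar x) - \frac{\ell^2}{2 M_1 D^2}$ if $\ell \le M_1 D^2$, and $\mathcal{Q}(\bar x)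 \le f(\hat y, \bar x) - \frac{\ell}{2}$ otherwise. -/
open Set
open scoped RealInnerProductSpace

/-- Refined bound on the inexactness of the cut for a value function with fixed
feasible set under Lipschitz continuity of `∇_y f` (Proposition `fixedprop1b`). -/
theorem stmt_1 {n m : ℕ}
    (X : Set (EuclideanSpace ℝ (Fin m))) (Y : Set (EuclideanSpace ℝ (Fin n)))
    (hXne : X.Nonempty) (hXcv : Convex ℝ X) (hXcp : IsCompact X)
    (hYne : Y.Nonempty) (hYcv : Convex ℝ Y) (hYcp : IsCompact Y)
    (f : EuclideanSpace ℝ (Fin n) × EuclideanSpace ℝ (Fin m) → ℝ)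
    (Gy : EuclideanSpace ℝ (Fin n) × EuclideanSpace ℝ (Fin m) → EuclideanSpace ℝ (Fin n))
    (Gx : EuclideanSpace ℝ (Fin n) × EuclideanSpace ℝ (Fin m) → EuclideanSpace ℝ (Fin m))
    (D : EuclideanSpace ℝ (Fin n) × EuclideanSpace ℝ (Fin m) →
         EuclideanSpace ℝ (Fin n) × EuclideanSpace ℝ (Fin m) →L[ℝ] ℝ)
    (hconv : ConvexOn ℝ (Y ×ˢ X) f)
    (hdiff : ∀ p ∈ Y ×ˢ X, HasFDerivAt f (D p) p)
    (hgrad : ∀ p ∈ Y ×ˢ X, ∀ v, D p v = ⟪Gy p, v.1⟫ + ⟪Gx p, v.2⟫)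
    (M₁ : ℝ) (hM₁ : 0 < M₁)
    (hLip : ∀ x ∈ X, ∀ y₁ ∈ Y, ∀ y₂ ∈ Y,
      ‖Gy (y₂, x) - Gy (y₁, x)‖ ≤ M₁ * ‖y₂ - y₁‖)
    (Q : EuclideanSpace ℝ (Fin m) → ℝ)
    (hQ : ∀ x ∈ X, Q x = sInf ((fun y => f (y, x)) '' Y))
    (xbar : EuclideanSpace ℝ (Fin m)) (hxbar : xbar ∈ X)
    (ε : ℝ) (hε : 0 ≤ ε)
    (yhat : EuclideanSpace ℝ (Fin n)) (hyhat : yhat ∈ Y)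
    (hepsopt : Q xbar ≥ f (yhat, xbar) - ε)
    (ℓ : ℝ)
    (hℓ : IsGreatest ((fun y => ⟪Gy (yhat, xbar), yhat - y⟫) '' Y) ℓ) :
    (ℓ ≤ M₁ * (Metric.diam Y) ^ 2 →
        Q xbar ≤ f (yhat, xbar) - ℓ ^ 2 / (2 * M₁ * (Metric.diam Y) ^ 2)) ∧
    (M₁ * (Metric.diam Y) ^ 2 < ℓ →
        Q xbar ≤ f (yhat, xbar) - ℓ / 2) := by
  classical
  obtain ⟨ystar, hystarY, hystar⟩ := hℓ.1
  have hℓ0 : 0 ≤ ℓ := hℓ.2 ⟨yhat, hyhat, by simp⟩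
  set g := Gy (yhat, xbar) with hg
  set u := ystar - yhat with hu
  have hgu : ⟪g, u⟫ = -ℓ := by
    have hystar' : ⟪g, yhat - ystar⟫ = ℓ := hystar
    rw [hu, ← neg_sub yhat ystar, inner_neg_right, hystar']
  set c : ℝ := M₁ * ‖u‖ ^ 2 / 2 with hc
  -- membership of the segment
  have hmem : ∀ t ∈ Icc (0:ℝ) 1, yhat + t • u ∈ Y := fun t ht =>
    hYcv.add_smul_sub_mem hyhat hystarY ht
  have hmemP : ∀ t ∈ Icc (0:ℝ) 1, ((yhat + t • u, xbar) :
      EuclideanSpace ℝ (Fin n) × EuclideanSpace ℝ (Fin m)) ∈ Y ×ˢ X :=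
    fun t ht => ⟨hmem t ht, hxbar⟩
  -- derivative of the path
  have hγ : ∀ t : ℝ, HasDerivAt (fun s : ℝ => ((yhat + s • u, xbar) :
      EuclideanSpace ℝ (Fin n) × EuclideanSpace ℝ (Fin m))) (u, 0) t := by
    intro t
    have h1 : HasDerivAt (fun s : ℝ => yhat + s • u) u t := by
      simpa using (((hasDerivAt_id t).smul_const u).const_add yhat)
    exact h1.prodMk (hasDerivAt_const t xbar)
  set ψ : ℝ → ℝ := fun s => f (yhat + s • u, xbar) + ℓ * s - c * s ^ 2 with hψdef
  have hψ : ∀ t ∈ Icc (0:ℝ) 1, HasDerivAt ψ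
      (D (yhat + t • u, xbar) (u, 0) + ℓ - c * (2 * t)) t := by
    intro t ht
    have hcomp : HasDerivAt (fun s : ℝ => f (yhat + s • u, xbar))
        (D (yhat + t • u, xbar) (u, 0)) t :=
      (hdiff _ (hmemP t ht)).comp_hasDerivAt t (hγ t)
    have hℓt : HasDerivAt (fun s : ℝ => ℓ * s) ℓ t := by
      simpa using (hasDerivAt_id t).const_mul ℓ
    have hct : HasDerivAt (fun s : ℝ => c * s ^ 2) (c * (2 * t)) t := by
      simpa using (hasDerivAt_pow 2 t).const_mul c
    exact (hcomp.add hℓt).sub hct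
  -- the derivative is nonpositive on (0,1)
  have hderiv_nonpos : ∀ t ∈ Ioo (0:ℝ) 1,
      D (yhat + t • u, xbar) (u, 0) + ℓ - c * (2 * t) ≤ 0 := by
    intro t ht
    have htI : t ∈ Icc (0:ℝ) 1 := Ioo_subset_Icc_self ht
    have hval : D (yhat + t • u, xbar) (u, 0) = ⟪Gy (yhat + t • u, xbar), u⟫ := by
      rw [hgrad _ (hmemP t htI) (u, 0)]
      simp
    have hsplit : ⟪Gy (yhat + t • u, xbar), u⟫
        = ⟪g, u⟫ + ⟪Gy (yhat + t • u, xbar) - g, u⟫ := by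
      rw [inner_sub_left]; ring
    have hlip' : ‖Gy (yhat + t • u, xbar) - g‖ ≤ M₁ * (t * ‖u‖) := by
      have := hLip xbar hxbar yhat hyhat (yhat + t • u) (hmem t htI)
      have hnorm : ‖(yhat + t • u) - yhat‖ = t * ‖u‖ := by
        rw [add_sub_cancel_left, norm_smul, Real.norm_eq_abs, abs_of_nonneg ht.1.le]
      rw [hnorm] at this
      simpa [hg] using this
    have hinner : ⟪Gy (yhat + t • u, xbar) - g, u⟫ ≤ M₁ * (t * ‖u‖) * ‖u‖ := by
      calc ⟪Gy (yhat + t • u, xbar) - g, u⟫ ≤ ‖Gy (yhat + t • u, xbar) - g‖ * ‖u‖ :=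
            real_inner_le_norm _ _
        _ ≤ M₁ * (t * ‖u‖) * ‖u‖ := by
            exact mul_le_mul_of_nonneg_right hlip' (norm_nonneg _)
    rw [hval, hsplit, hgu]
    have : c * (2 * t) = M₁ * (t * ‖u‖) * ‖u‖ := by rw [hc]; ring
    linarith [hinner]
  -- ψ is antitone on [0,1]
  have hanti : AntitoneOn ψ (Icc (0:ℝ) 1) := by
    apply antitoneOn_of_deriv_nonpos (convex_Icc (0:ℝ) 1)
    · exact fun t ht => (hψ t ht).differentiableAt.continuousAt.continuousWithinAt
    · rw [interior_Icc]
      exact fun t ht => (hψ t (Ioo_subset_Icc_self ht)).differentiableAt.differentiableWithinAt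
    · rw [interior_Icc]
      intro t ht
      rw [(hψ t (Ioo_subset_Icc_self ht)).deriv]
      exact hderiv_nonpos t ht
  -- Q xbar ≤ f(y, xbar) for every y ∈ Y
  have hfc : ContinuousOn f (Y ×ˢ X) := fun p hp =>
    (hdiff p hp).continuousAt.continuousWithinAt
  have hQle : ∀ y ∈ Y, Q xbar ≤ f (y, xbar) := by
    intro y hy
    rw [hQ xbar hxbar]
    apply csInf_le
    · have hcont : ContinuousOn (fun y => f (y, xbar)) Y := by
        apply hfc.comp ((continuous_id.prodMk continuous_const).continuousOn)
        intro z hz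
        exact ⟨hz, hxbar⟩
      exact (hYcp.image_of_continuousOn hcont).bddBelow
    · exact ⟨y, hy, rfl⟩
  -- key estimate
  have key : ∀ t ∈ Icc (0:ℝ) 1,
      Q xbar ≤ f (yhat, xbar) - ℓ * t + c * t ^ 2 := by
    intro t ht
    have h1 : ψ t ≤ ψ 0 := hanti (left_mem_Icc.2 zero_le_one) ht ht.1
    have h0 : ψ 0 = f (yhat, xbar) := by simp [hψdef]
    have h2 : Q xbar ≤ f (yhat + t • u, xbar) := hQle _ (hmem t ht)
    rw [h0] at h1
    have : f (yhat + t • u, xbar) ≤ f (yhat, xbar) - ℓ * t + c * t ^ 2 := by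
      have := h1
      simp only [hψdef] at this
      linarith
    linarith
  -- replace ‖u‖ by the diameter
  set Dm : ℝ := Metric.diam Y with hDm
  have hDm0 : 0 ≤ Dm := Metric.diam_nonneg
  have hule : ‖u‖ ≤ Dm := by
    have := Metric.dist_le_diam_of_mem hYcp.isBounded hystarY hyhat
    rwa [dist_eq_norm] at this
  have hcle : c ≤ M₁ * Dm ^ 2 / 2 := by
    have h2 : ‖u‖ ^ 2 ≤ Dm ^ 2 := by
      apply pow_le_pow_left₀ (norm_nonneg _) hule
    rw [hc]
    nlinarith
  have key2 : ∀ t ∈ Icc (0:ℝ) 1,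
      Q xbar ≤ f (yhat, xbar) - ℓ * t + (M₁ * Dm ^ 2 / 2) * t ^ 2 := by
    intro t ht
    have h1 := key t ht
    have ht2 : (0:ℝ) ≤ t ^ 2 := sq_nonneg t
    nlinarith [mul_le_mul_of_nonneg_right hcle ht2]
  constructor
  · intro hcase
    by_cases hMD : M₁ * Dm ^ 2 = 0
    · have hℓz : ℓ = 0 := le_antisymm (by rw [hMD] at hcase; exact hcase) hℓ0
      have := key2 0 (left_mem_Icc.2 zero_le_one)
      simpa [hℓz] using this
    · have hpos : 0 < M₁ * Dm ^ 2 :=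
        lt_of_le_of_ne (mul_nonneg hM₁.le (sq_nonneg _)) (Ne.symm hMD)
      set t₀ : ℝ := ℓ / (M₁ * Dm ^ 2) with ht₀
      have ht₀mem : t₀ ∈ Icc (0:ℝ) 1 :=
        ⟨div_nonneg hℓ0 hpos.le, (div_le_one hpos).2 hcase⟩
      have h1 := key2 t₀ ht₀mem
      have heq : f (yhat, xbar) - ℓ * t₀ + (M₁ * Dm ^ 2 / 2) * t₀ ^ 2
          = f (yhat, xbar) - ℓ ^ 2 / (2 * M₁ * Dm ^ 2) := by
        rw [ht₀]
        have hM₁ne : M₁ ≠ 0 := hM₁.ne'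
        have hDmne : Dm ≠ 0 := fun h => hMD (by rw [h]; ring)
        field_simp
        ring
      rw [heq] at h1
      exact h1
  · intro hcase
    have h1 := key2 1 (right_mem_Icc.2 zero_le_one)
    simp only [mul_one, one_pow] at h1
    linarith
end

section
/- Let $Y \subseteq \mathbb{R}^n$ be nonempty convex compact, $f$ convex differentiable on $Y \times X$ with $\nabla_y f(\cdot, x)$ $M_1$-Lipschitz on $Y$ uniformly in $x$. Let $\hat y \in Y$ be an $\varepsilon_1$-optimal solution of $\mathcal{Q}(\bar x)=\inf_{y\in Y} f(y,\bar x)$, and let $\tilde y \in Y$ be an $\varepsilon_2$-optimal solution of $\max_{y \in Y}\langle \nabla_y f(\hat y, \bar x), \hat y - y\rangle$. Set $\hat\ell = \langle \nabla_y f(\hat y, \bar x), \hat y - \tilde y\rangle$, $\eta = \varepsilon_2 + \hat\ell$, and $\mathcal{C}(x) = f(\hat y, \bar x) - \eta + \langle \nabla_x f(\hat y, \bar x), x - \bar x\rangle$. Then $\mathcal{C} \le \mathcal{Q}$ on $X$ and $\mathcal{Q}(\bar x) - \mathcal{C}(\bar x) \le \varepsilon_0$, where $\varepsilon_0 = \varepsilon_2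 + \hat\ell$ if $\hat\ell \le 0$; $\varepsilon_0 = \varepsilon_2 + \frac{\hat\ell}{2 M_1 D^2}(2 M_1 D^2 - \hat\ell)$ if $0 < \hat\ell \le M_1 D^2$; and $\varepsilon_0 = \varepsilon_2 + \frac{\hat\ell}{2}$ otherwise, with $D = \mathrm{Diam}(Y)$. -/
open Set
open scoped RealInnerProductSpace

/-- First-order condition for convex differentiable functions. -/
lemma stmt_2_grad_ineq {E : Type*} [NormedAddCommGroup E] [NormedSpace ℝ E]
    {S : Set E} {f : E → ℝ} {Df : E →L[ℝ] ℝ}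
    (hf : ConvexOn ℝ S f) {p q : E} (hp : p ∈ S) (hq : q ∈ S)
    (hdiff : HasFDerivAt f Df p) :
    Df (q - p) ≤ f q - f p := by
  have hmem : Icc (0:ℝ) 1 ⊆ (AffineMap.lineMap p q : ℝ →ᵃ[ℝ] E) ⁻¹' S := by
    intro t ht
    have : AffineMap.lineMap p q t ∈ segment ℝ p q := by
      rw [segment_eq_image_lineMap]; exact ⟨t, ht, rfl⟩
    exact hf.1.segment_subset hp hq this
  have hg : ConvexOn ℝ (Icc (0:ℝ) 1) (f ∘ (AffineMap.lineMap p q : ℝ →ᵃ[ℝ] E)) :=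
    (hf.comp_affineMap (AffineMap.lineMap p q)).subset hmem (convex_Icc 0 1)
  have hline : HasDerivAt (AffineMap.lineMap p q : ℝ → E) (q - p) (0:ℝ) :=
    AffineMap.hasDerivAt_lineMap
  have hd : HasDerivAt (f ∘ (AffineMap.lineMap p q : ℝ →ᵃ[ℝ] E)) (Df (q - p)) 0 :=
    hdiff.comp_hasDerivAt_of_eq 0 hline (by simp)
  have hs := hg.le_slope_of_hasDerivAt (left_mem_Icc.mpr zero_le_one)
    (right_mem_Icc.mpr zero_le_one) one_pos hd
  rw [slope_def_field] at hs
  simpa using hs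

/-- Inexact cut with approximate solution of the auxiliary linearized problem
(Proposition `fixedprop2`). -/
theorem stmt_2 {n m : ℕ}
    (X : Set (EuclideanSpace ℝ (Fin m))) (Y : Set (EuclideanSpace ℝ (Fin n)))
    (hXne : X.Nonempty) (hXcv : Convex ℝ X) (hXcp : IsCompact X)
    (hYne : Y.Nonempty) (hYcv : Convex ℝ Y) (hYcp : IsCompact Y)
    (f : EuclideanSpace ℝ (Fin n) × EuclideanSpace ℝ (Fin m) → ℝ)
    (Gy : EuclideanSpace ℝ (Fin n) × EuclideanSpace ℝ (Fin m) → EuclideanSpace ℝ (Fin n))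
    (Gx : EuclideanSpace ℝ (Fin n) × EuclideanSpace ℝ (Fin m) → EuclideanSpace ℝ (Fin m))
    (D : EuclideanSpace ℝ (Fin n) × EuclideanSpace ℝ (Fin m) →
         EuclideanSpace ℝ (Fin n) × EuclideanSpace ℝ (Fin m) →L[ℝ] ℝ)
    (hconv : ConvexOn ℝ (Y ×ˢ X) f)
    (hdiff : ∀ p ∈ Y ×ˢ X, HasFDerivAt f (D p) p)
    (hgrad : ∀ p ∈ Y ×ˢ X, ∀ v, D p v = ⟪Gy p, v.1⟫ + ⟪Gx p, v.2⟫)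
    (M₁ : ℝ) (hM₁ : 0 < M₁)
    (hLip : ∀ x ∈ X, ∀ y₁ ∈ Y, ∀ y₂ ∈ Y,
      ‖Gy (y₂, x) - Gy (y₁, x)‖ ≤ M₁ * ‖y₂ - y₁‖)
    (Q : EuclideanSpace ℝ (Fin m) → ℝ)
    (hQ : ∀ x ∈ X, Q x = sInf ((fun y => f (y, x)) '' Y))
    (xbar : EuclideanSpace ℝ (Fin m)) (hxbar : xbar ∈ X)
    (ε₁ ε₂ : ℝ) (hε₁ : 0 ≤ ε₁) (hε₂ : 0 ≤ ε₂)
    (yhat : EuclideanSpace ℝ (Fin n)) (hyhat : yhat ∈ Y)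
    (hepsopt : Q xbar ≥ f (yhat, xbar) - ε₁)
    -- the exact optimal value `ℓ₁` of the linearized problem and an `ε₂`-optimal solution
    (ℓ₁ : ℝ)
    (hℓ₁ : IsGreatest ((fun y => ⟪Gy (yhat, xbar), yhat - y⟫) '' Y) ℓ₁)
    (ytil : EuclideanSpace ℝ (Fin n)) (hytil : ytil ∈ Y)
    (hytilopt : ℓ₁ - ε₂ ≤ ⟪Gy (yhat, xbar), yhat - ytil⟫)
    (ℓhat η ε₀ : ℝ)
    (hℓhat : ℓhat = ⟪Gy (yhat, xbar), yhat - ytil⟫)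
    (hη : η = ε₂ + ℓhat)
    (hε₀ : ε₀ = if ℓhat ≤ 0 then ε₂ + ℓhat
      else if ℓhat ≤ M₁ * (Metric.diam Y) ^ 2 then
        ε₂ + ℓhat / (2 * M₁ * (Metric.diam Y) ^ 2) * (2 * M₁ * (Metric.diam Y) ^ 2 - ℓhat)
      else ε₂ + ℓhat / 2)
    (C : EuclideanSpace ℝ (Fin m) → ℝ)
    (hC : ∀ x, C x = f (yhat, xbar) - η + ⟪Gx (yhat, xbar), x - xbar⟫) :
    (∀ x ∈ X, C x ≤ Q x) ∧ Q xbar - C xbar ≤ ε₀ := by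
  have hp₀S : (yhat, xbar) ∈ Y ×ˢ X := ⟨hyhat, hxbar⟩
  -- Part 1 : pointwise bound
  have key : ∀ x ∈ X, ∀ y ∈ Y, C x ≤ f (y, x) := by
    intro x hx y hy
    have h1 := stmt_2_grad_ineq hconv hp₀S (show (y, x) ∈ Y ×ˢ X from ⟨hy, hx⟩)
      (hdiff _ hp₀S)
    have h2 : D (yhat, xbar) ((y, x) - (yhat, xbar))
        = ⟪Gy (yhat, xbar), y - yhat⟫ + ⟪Gx (yhat, xbar), x - xbar⟫ := by
      rw [hgrad _ hp₀S]; rfl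
    have h3 : ⟪Gy (yhat, xbar), yhat - y⟫ ≤ ℓ₁ := hℓ₁.2 ⟨y, hy, rfl⟩
    have h4 : ℓ₁ ≤ ℓhat + ε₂ := by rw [hℓhat]; linarith
    have h5 : ⟪Gy (yhat, xbar), y - yhat⟫ = -⟪Gy (yhat, xbar), yhat - y⟫ := by
      rw [← inner_neg_right, neg_sub]
    rw [h2] at h1
    rw [hC, hη]
    linarith
  have part1 : ∀ x ∈ X, C x ≤ Q x := by
    intro x hx
    rw [hQ x hx]
    refine le_csInf (hYne.image _) ?_
    rintro b ⟨y, hy, rfl⟩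
    exact key x hx y hy
  refine ⟨part1, ?_⟩
  -- Part 2
  have hbdd : BddBelow ((fun y => f (y, xbar)) '' Y) := by
    refine ⟨C xbar, ?_⟩
    rintro b ⟨y, hy, rfl⟩
    exact key xbar hxbar y hy
  have hQle : ∀ y ∈ Y, Q xbar ≤ f (y, xbar) := by
    intro y hy
    rw [hQ xbar hxbar]
    exact csInf_le hbdd ⟨y, hy, rfl⟩
  have hCxbar : C xbar = f (yhat, xbar) - η := by
    rw [hC]; simp
  set u : EuclideanSpace ℝ (Fin n) := ytil - yhat with hu
  have hmemY : ∀ t ∈ Icc (0:ℝ) 1, AffineMap.lineMap yhat ytil t ∈ Y := by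
    intro t ht
    have : AffineMap.lineMap yhat ytil t ∈ segment ℝ yhat ytil := by
      rw [segment_eq_image_lineMap]; exact ⟨t, ht, rfl⟩
    exact hYcv.segment_subset hyhat hytil this
  -- descent lemma along the segment
  have hdesc : ∀ t ∈ Icc (0:ℝ) 1,
      f (AffineMap.lineMap yhat ytil t, xbar)
        ≤ f (yhat, xbar) - ℓhat * t + M₁ * ‖u‖ ^ 2 / 2 * t ^ 2 := by
    set φ : ℝ → ℝ := fun t =>
      f (AffineMap.lineMap yhat ytil t, xbar) + ℓhat * t - M₁ * ‖u‖ ^ 2 / 2 * t ^ 2 with hφdef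
    have hder : ∀ t ∈ Icc (0:ℝ) 1, HasDerivAt φ
        (⟪Gy (AffineMap.lineMap yhat ytil t, xbar), u⟫ + ℓhat - M₁ * ‖u‖ ^ 2 * t) t := by
      intro t ht
      have hpt : (AffineMap.lineMap yhat ytil t, xbar) ∈ Y ×ˢ X := ⟨hmemY t ht, hxbar⟩
      have hline : HasDerivAt
          (fun s : ℝ => ((AffineMap.lineMap yhat ytil s : EuclideanSpace ℝ (Fin n)), xbar))
          ((u, 0) : EuclideanSpace ℝ (Fin n) × EuclideanSpace ℝ (Fin m)) t :=
        HasDerivAt.prodMk (AffineMap.hasDerivAt_lineMap) (hasDerivAt_const t xbar)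
      have hfd : HasDerivAt (fun s : ℝ => f (AffineMap.lineMap yhat ytil s, xbar))
          (D (AffineMap.lineMap yhat ytil t, xbar) ((u, 0))) t :=
        (hdiff _ hpt).comp_hasDerivAt t hline
      have hval : D (AffineMap.lineMap yhat ytil t, xbar) ((u, 0))
          = ⟪Gy (AffineMap.lineMap yhat ytil t, xbar), u⟫ := by
        rw [hgrad _ hpt]; simp
      rw [hval] at hfd
      have h2 : HasDerivAt (fun s : ℝ => ℓhat * s) ℓhat t := by
        simpa using (hasDerivAt_id t).const_mul ℓhat
      have h3 : HasDerivAt (fun s : ℝ => M₁ * ‖u‖ ^ 2 / 2 * s ^ 2) (M₁ * ‖u‖ ^ 2 * t) t := by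
        have := (hasDerivAt_pow 2 t).const_mul (M₁ * ‖u‖ ^ 2 / 2)
        exact this.congr_deriv (by ring)
      exact (hfd.add h2).sub h3
    have hℓu : ℓhat = -⟪Gy (yhat, xbar), u⟫ := by
      rw [hℓhat, ← inner_neg_right]
      congr 1
      rw [hu]; abel
    have hsign : ∀ t ∈ interior (Icc (0:ℝ) 1), deriv φ t ≤ 0 := by
      intro t ht
      rw [interior_Icc] at ht
      have ht' : t ∈ Icc (0:ℝ) 1 := ⟨ht.1.le, ht.2.le⟩
      rw [(hder t ht').deriv]
      set yt := AffineMap.lineMap yhat ytil t with hyt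
      have hytY := hmemY t ht'
      have hdi : ⟪Gy (yt, xbar), u⟫ - ⟪Gy (yhat, xbar), u⟫
          = ⟪Gy (yt, xbar) - Gy (yhat, xbar), u⟫ := (inner_sub_left _ _ _).symm
      have h1 : ⟪Gy (yt, xbar) - Gy (yhat, xbar), u⟫
          ≤ ‖Gy (yt, xbar) - Gy (yhat, xbar)‖ * ‖u‖ := real_inner_le_norm _ _
      have h2 : ‖Gy (yt, xbar) - Gy (yhat, xbar)‖ ≤ M₁ * ‖yt - yhat‖ :=
        hLip xbar hxbar yhat hyhat yt hytY
      have h3 : yt - yhat = t • u := by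
        rw [hyt, AffineMap.lineMap_apply, hu]
        simp [vsub_eq_sub, vadd_eq_add]
      have h4 : ‖yt - yhat‖ = t * ‖u‖ := by
        rw [h3, norm_smul, Real.norm_eq_abs, abs_of_nonneg ht.1.le]
      have h5 : ‖Gy (yt, xbar) - Gy (yhat, xbar)‖ * ‖u‖ ≤ M₁ * (t * ‖u‖) * ‖u‖ := by
        rw [← h4]
        exact mul_le_mul_of_nonneg_right h2 (norm_nonneg u)
      linarith [hℓu, hdi, h1, h5]
    have hanti : AntitoneOn φ (Icc (0:ℝ) 1) := by
      refine antitoneOn_of_deriv_nonpos (convex_Icc 0 1)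
        (fun t ht => (hder t ht).continuousAt.continuousWithinAt) ?_ hsign
      intro t ht
      rw [interior_Icc] at ht
      exact ((hder t ⟨ht.1.le, ht.2.le⟩).differentiableAt).differentiableWithinAt
    intro t ht
    have h0 := hanti (left_mem_Icc.mpr zero_le_one) ht ht.1
    have hφ0 : φ 0 = f (yhat, xbar) := by simp [hφdef]
    have hφt : φ t = f (AffineMap.lineMap yhat ytil t, xbar)
        + ℓhat * t - M₁ * ‖u‖ ^ 2 / 2 * t ^ 2 := rfl
    rw [hφ0, hφt] at h0
    linarith
  have hunorm : ‖u‖ ≤ Metric.diam Y := by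
    rw [hu, ← dist_eq_norm]
    exact Metric.dist_le_diam_of_mem hYcp.isBounded hytil hyhat
  rcases le_or_gt ℓhat 0 with hneg | hpos
  · have := hQle yhat hyhat
    rw [hε₀, if_pos hneg, hCxbar, hη]
    linarith
  · have hu0 : u ≠ 0 := by
      intro h0
      have h1 : yhat - ytil = -u := by rw [hu]; abel
      have : ℓhat = 0 := by rw [hℓhat, h1, h0, neg_zero, inner_zero_right]
      linarith
    have hDpos : 0 < Metric.diam Y := lt_of_lt_of_le (norm_pos_iff.mpr hu0) hunorm
    have hcpos : 0 < M₁ * Metric.diam Y ^ 2 := by positivity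
    have husq : ‖u‖ ^ 2 ≤ Metric.diam Y ^ 2 := by nlinarith [norm_nonneg u]
    rcases le_or_gt ℓhat (M₁ * Metric.diam Y ^ 2) with hle | hgt
    · set t : ℝ := ℓhat / (M₁ * Metric.diam Y ^ 2) with htdef
      have ht0 : 0 < t := div_pos hpos hcpos
      have ht1 : t ≤ 1 := (div_le_one hcpos).mpr hle
      have hd := hdesc t ⟨ht0.le, ht1⟩
      have hQ2 := hQle _ (hmemY t ⟨ht0.le, ht1⟩)
      rw [hε₀, if_neg (not_le.mpr hpos), if_pos hle, hCxbar, hη]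
      have htc : t * (M₁ * Metric.diam Y ^ 2) = ℓhat := div_mul_cancel₀ _ hcpos.ne'
      have hfrac : ℓhat / (2 * M₁ * Metric.diam Y ^ 2) = t / 2 := by
        rw [htdef, div_div]
        congr 1
        ring
      rw [hfrac]
      have hkey : M₁ * ‖u‖ ^ 2 * t ^ 2 ≤ M₁ * Metric.diam Y ^ 2 * t ^ 2 :=
        mul_le_mul_of_nonneg_right (mul_le_mul_of_nonneg_left husq hM₁.le) (sq_nonneg t)
      have h6 : M₁ * Metric.diam Y ^ 2 * t ^ 2 = ℓhat * t := by rw [← htc]; ring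
      linarith [hQ2, hd, hkey, h6]
    · have hd := hdesc 1 ⟨zero_le_one, le_refl 1⟩
      have hQ2 := hQle _ (hmemY 1 ⟨zero_le_one, le_refl 1⟩)
      rw [hε₀, if_neg (not_le.mpr hpos), if_neg (not_le.mpr hgt), hCxbar, hη]
      have h7 : M₁ * ‖u‖ ^ 2 ≤ M₁ * Metric.diam Y ^ 2 :=
        mul_le_mul_of_nonneg_left husq hM₁.le
      linarith [hQ2, hd, h7, hgt]
end

section
/- Let $\mathcal{Q}(x) = \inf\{f(y,x) : y \in Y,\ Ay + Bx = b,\ g(y,x) \le 0\}$ with $Y$ convex compact, $f$ and each component of $g$ convex and differentiable on $Y \times X$, and assume strong duality holds at every $x \in X$ (e.g., via a Slater condition). Fix $\bar x \in X$, let $\hat y$ be an $\varepsilon$-optimal feasible primal solution at $\bar x$, and let $(\hat\lambda, \hat\mu)$ with $\hat\mu \ge 0$ be an $\varepsilon$-optimal feasible dual solution. Define the Lagrangian $L_{\bar x}(y, \lambda, \mu) = f(y, \bar x) + \lambda^T(Bx + Ay - b) + \mu^T g(y, \bar x)$ evaluated at $x = \bar x$, and $\eta = \max_{y \in Y} \langle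 \nabla_y L_{\bar x}(\hat y, \hat\lambda, \hat\mu), \hat y - y \rangle$. Then the affine function $\mathcal{C}(x) = L_{\bar x}(\hat y, \hat\lambda, \hat\mu) - \eta + \langle \nabla_x L_{\bar x}(\hat y, \hat\lambda, \hat\mu), x - \bar x\rangle$ satisfies $\mathcal{C}(x) \le \mathcal{Q}(x)$ for all $x \in X$, and $\mathcal{Q}(\bar x) - \mathcal{C}(\bar x) \le \varepsilon + \eta$. -/
open Set
open scoped RealInnerProductSpace

open Filter Topology in

lemma convex_grad_ineq {E : Type*} [NormedAddCommGroup E] [NormedSpace ℝ E]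
    {s : Set E} {h : E → ℝ} (hconv : ConvexOn ℝ s h) {z0 z : E}
    (hz0 : z0 ∈ s) (hz : z ∈ s) {D : E →L[ℝ] ℝ} (hD : HasFDerivAt h D z0) :
    h z0 + D (z - z0) ≤ h z := by
  set φ : ℝ → ℝ := fun t => h (z0 + t • (z - z0)) with hφ
  have hc : HasDerivAt (fun t : ℝ => z0 + t • (z - z0)) (z - z0) 0 := by
    simpa using ((hasDerivAt_id (0:ℝ)).smul_const (z - z0)).const_add z0
  have hφd : HasDerivAt φ (D (z - z0)) 0 := by
    have h0 : z0 + (0:ℝ) • (z - z0) = z0 := by simp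
    have := HasFDerivAt.comp_hasDerivAt (0:ℝ) (h0 ▸ hD) hc
    exact this
  have hslope : Tendsto (slope φ 0) (𝓝[>] 0) (𝓝 (D (z - z0))) :=
    (hasDerivAt_iff_tendsto_slope.mp hφd).mono_left
      (nhdsWithin_mono _ (fun t ht => ne_of_gt ht))
  have hbound : ∀ᶠ t in 𝓝[>] (0:ℝ), slope φ 0 t ≤ h z - h z0 := by
    filter_upwards [Ioc_mem_nhdsGT_of_mem (by norm_num : (0:ℝ) ∈ Ico (0:ℝ) 1)] with t ht
    have hmem := hconv.2 hz0 hz (by linarith [ht.2] : (0:ℝ) ≤ 1 - t) (le_of_lt ht.1)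
      (by ring)
    have heq : (1 - t) • z0 + t • z = z0 + t • (z - z0) := by
      rw [smul_sub]; module
    rw [heq, smul_eq_mul, smul_eq_mul] at hmem
    rw [slope_def_field, sub_zero, div_le_iff₀ ht.1]
    simp only [hφ, zero_smul, add_zero]
    nlinarith [hmem]
  have := le_of_tendsto hslope hbound
  linarith

/-- Inexact cut for the value function of a parametric convex program with
variable feasible set (Proposition `varprop1`). -/
theorem stmt_3 {n m q p : ℕ}
    (X : Set (EuclideanSpace ℝ (Fin m))) (Y : Set (EuclideanSpace ℝ (Fin n)))
    (hXne : X.Nonempty) (hXcv : Convex ℝ X) (hXcp : IsCompact X)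
    (hYne : Y.Nonempty) (hYcv : Convex ℝ Y) (hYcp : IsCompact Y)
    (A : EuclideanSpace ℝ (Fin n) →L[ℝ] EuclideanSpace ℝ (Fin q))
    (B : EuclideanSpace ℝ (Fin m) →L[ℝ] EuclideanSpace ℝ (Fin q))
    (b : EuclideanSpace ℝ (Fin q))
    (f : EuclideanSpace ℝ (Fin n) × EuclideanSpace ℝ (Fin m) → ℝ)
    (g : Fin p → EuclideanSpace ℝ (Fin n) × EuclideanSpace ℝ (Fin m) → ℝ)
    -- partial gradients and joint differentiability of `f` and of each `g i` on `Y ×ˢ X`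
    (Gfy : EuclideanSpace ℝ (Fin n) × EuclideanSpace ℝ (Fin m) → EuclideanSpace ℝ (Fin n))
    (Gfx : EuclideanSpace ℝ (Fin n) × EuclideanSpace ℝ (Fin m) → EuclideanSpace ℝ (Fin m))
    (Ggy : Fin p → EuclideanSpace ℝ (Fin n) × EuclideanSpace ℝ (Fin m) → EuclideanSpace ℝ (Fin n))
    (Ggx : Fin p → EuclideanSpace ℝ (Fin n) × EuclideanSpace ℝ (Fin m) → EuclideanSpace ℝ (Fin m))
    (Df : EuclideanSpace ℝ (Fin n) × EuclideanSpace ℝ (Fin m) →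
          EuclideanSpace ℝ (Fin n) × EuclideanSpace ℝ (Fin m) →L[ℝ] ℝ)
    (Dg : Fin p → EuclideanSpace ℝ (Fin n) × EuclideanSpace ℝ (Fin m) →
          EuclideanSpace ℝ (Fin n) × EuclideanSpace ℝ (Fin m) →L[ℝ] ℝ)
    (hfconv : ConvexOn ℝ (Y ×ˢ X) f)
    (hgconv : ∀ i, ConvexOn ℝ (Y ×ˢ X) (g i))
    (hfdiff : ∀ z ∈ Y ×ˢ X, HasFDerivAt f (Df z) z)
    (hfgrad : ∀ z ∈ Y ×ˢ X, ∀ v, Df z v = ⟪Gfy z, v.1⟫ + ⟪Gfx z, v.2⟫)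
    (hgdiff : ∀ i, ∀ z ∈ Y ×ˢ X, HasFDerivAt (g i) (Dg i z) z)
    (hggrad : ∀ i, ∀ z ∈ Y ×ˢ X, ∀ v, Dg i z v = ⟪Ggy i z, v.1⟫ + ⟪Ggx i z, v.2⟫)
    -- value function, feasible set, dual function
    (S : EuclideanSpace ℝ (Fin m) → Set (EuclideanSpace ℝ (Fin n)))
    (hS : ∀ x, S x = {y ∈ Y | A y + B x = b ∧ ∀ i, g (i) (y, x) ≤ 0})
    (Q : EuclideanSpace ℝ (Fin m) → ℝ)
    (hQ : ∀ x ∈ X, Q x = sInf ((fun y => f (y, x)) '' S x))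
    (θ : EuclideanSpace ℝ (Fin m) → EuclideanSpace ℝ (Fin q) → (Fin p → ℝ) → ℝ)
    (hθ : ∀ x lam mu, θ x lam mu =
      sInf ((fun y => f (y, x) + ⟪lam, A y + B x - b⟫ + ∑ i, mu i * g i (y, x)) '' Y))
    -- strong duality at every `x ∈ X`
    (hstrong : ∀ x ∈ X,
      IsLUB {v : ℝ | ∃ lam mu, (∀ i, 0 ≤ mu i) ∧ v = θ x lam mu} (Q x))
    (xbar : EuclideanSpace ℝ (Fin m)) (hxbar : xbar ∈ X)
    (ε : ℝ) (hε : 0 ≤ ε)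
    -- `ε`-optimal feasible primal solution
    (yhat : EuclideanSpace ℝ (Fin n)) (hyhatfeas : yhat ∈ S xbar)
    (hyhatopt : f (yhat, xbar) ≤ Q xbar + ε)
    -- `ε`-optimal feasible dual solution
    (lamhat : EuclideanSpace ℝ (Fin q)) (muhat : Fin p → ℝ)
    (hmuhat : ∀ i, 0 ≤ muhat i)
    (hdualopt : θ xbar lamhat muhat ≥ Q xbar - ε)
    -- Lagrangian at `x̄`, its value and gradient at `ŷ`
    (L : EuclideanSpace ℝ (Fin n) → EuclideanSpace ℝ (Fin m) → ℝ)
    (hL : ∀ y x, L y x = f (y, x) + ⟪lamhat, A y + B x - b⟫ + ∑ i, muhat i * g i (y, x))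
    (GLy : EuclideanSpace ℝ (Fin n)) (GLx : EuclideanSpace ℝ (Fin m))
    (hGLy : GLy = Gfy (yhat, xbar) + (ContinuousLinearMap.adjoint A) lamhat
      + ∑ i, muhat i • Ggy i (yhat, xbar))
    (hGLx : GLx = Gfx (yhat, xbar) + (ContinuousLinearMap.adjoint B) lamhat
      + ∑ i, muhat i • Ggx i (yhat, xbar))
    (η : ℝ)
    (hη : IsGreatest ((fun y => ⟪GLy, yhat - y⟫) '' Y) η)
    (C : EuclideanSpace ℝ (Fin m) → ℝ)
    (hC : ∀ x, C x = L yhat xbar - η + ⟪GLx, x - xbar⟫) :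
    (∀ x ∈ X, C x ≤ Q x) ∧ Q xbar - C xbar ≤ ε + η := by

  have hyhatY : yhat ∈ Y := by rw [hS] at hyhatfeas; exact hyhatfeas.1
  have hz0 : ((yhat, xbar) : EuclideanSpace ℝ (Fin n) × EuclideanSpace ℝ (Fin m)) ∈ Y ×ˢ X :=
    ⟨hyhatY, hxbar⟩
  -- gradient inequality for the Lagrangian
  have key : ∀ y ∈ Y, ∀ x ∈ X,
      L yhat xbar + ⟪GLy, y - yhat⟫ + ⟪GLx, x - xbar⟫ ≤ L y x := by
    intro y hy x hx
    have hz : ((y, x) : EuclideanSpace ℝ (Fin n) × EuclideanSpace ℝ (Fin m)) ∈ Y ×ˢ X :=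
      ⟨hy, hx⟩
    have hsub : ((y, x) : EuclideanSpace ℝ (Fin n) × EuclideanSpace ℝ (Fin m)) - (yhat, xbar)
        = (y - yhat, x - xbar) := rfl
    have hf1 : f (yhat, xbar) + (⟪Gfy (yhat, xbar), y - yhat⟫ + ⟪Gfx (yhat, xbar), x - xbar⟫)
        ≤ f (y, x) := by
      have h1 := convex_grad_ineq hfconv hz0 hz (hfdiff _ hz0)
      rwa [hsub, hfgrad _ hz0 (y - yhat, x - xbar)] at h1
    have hg1 : ∀ i, muhat i * g i (yhat, xbar) + muhat i * ⟪Ggy i (yhat, xbar), y - yhat⟫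
        + muhat i * ⟪Ggx i (yhat, xbar), x - xbar⟫ ≤ muhat i * g i (y, x) := by
      intro i
      have h1 := convex_grad_ineq (hgconv i) hz0 hz (hgdiff i _ hz0)
      rw [hsub, hggrad i _ hz0 (y - yhat, x - xbar)] at h1
      nlinarith [mul_le_mul_of_nonneg_left h1 (hmuhat i)]
    have hgsum : ∑ i, muhat i * g i (yhat, xbar) + ∑ i, muhat i * ⟪Ggy i (yhat, xbar), y - yhat⟫
        + ∑ i, muhat i * ⟪Ggx i (yhat, xbar), x - xbar⟫ ≤ ∑ i, muhat i * g i (y, x) := by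
      rw [← Finset.sum_add_distrib, ← Finset.sum_add_distrib]
      exact Finset.sum_le_sum fun i _ => hg1 i
    have hlin : ⟪lamhat, A y + B x - b⟫ = ⟪lamhat, A yhat + B xbar - b⟫
        + ⟪(ContinuousLinearMap.adjoint A) lamhat, y - yhat⟫
        + ⟪(ContinuousLinearMap.adjoint B) lamhat, x - xbar⟫ := by
      rw [ContinuousLinearMap.adjoint_inner_left, ContinuousLinearMap.adjoint_inner_left,
        map_sub, map_sub, ← inner_add_right, ← inner_add_right]
      congr 1
      abel
    have hGy : ⟪GLy, y - yhat⟫ = ⟪Gfy (yhat, xbar), y - yhat⟫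
        + ⟪(ContinuousLinearMap.adjoint A) lamhat, y - yhat⟫
        + ∑ i, muhat i * ⟪Ggy i (yhat, xbar), y - yhat⟫ := by
      rw [hGLy, inner_add_left, inner_add_left, sum_inner]
      simp [real_inner_smul_left, Finset.mul_sum, mul_assoc]
    have hGx : ⟪GLx, x - xbar⟫ = ⟪Gfx (yhat, xbar), x - xbar⟫
        + ⟪(ContinuousLinearMap.adjoint B) lamhat, x - xbar⟫
        + ∑ i, muhat i * ⟪Ggx i (yhat, xbar), x - xbar⟫ := by
      rw [hGLx, inner_add_left, inner_add_left, sum_inner]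
      simp [real_inner_smul_left, Finset.mul_sum, mul_assoc]
    rw [hL, hL, hGy, hGx, hlin]
    linarith
  -- C is a lower bound for the dual objective values
  have hlb : ∀ x ∈ X, C x ∈ lowerBounds
      ((fun y => f (y, x) + ⟪lamhat, A y + B x - b⟫ + ∑ i, muhat i * g i (y, x)) '' Y) := by
    rintro x hx v ⟨y, hy, rfl⟩
    have hk := key y hy x hx
    have hηy : ⟪GLy, yhat - y⟫ ≤ η := hη.2 (Set.mem_image_of_mem _ hy)
    have hflip : ⟪GLy, y - yhat⟫ = -⟪GLy, yhat - y⟫ := by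
      rw [← inner_neg_right]; congr 1; abel
    show C x ≤ f (y, x) + ⟪lamhat, A y + B x - b⟫ + ∑ i, muhat i * g i (y, x)
    rw [hC, ← hL y x]
    linarith [hk, hflip ▸ hk]
  have hCθ : ∀ x ∈ X, C x ≤ θ x lamhat muhat := by
    intro x hx
    rw [hθ]
    exact le_csInf (hYne.image _) fun v hv => hlb x hx hv
  have hθQ : ∀ x ∈ X, θ x lamhat muhat ≤ Q x := fun x hx =>
    (hstrong x hx).1 ⟨lamhat, muhat, hmuhat, rfl⟩
  constructor
  · exact fun x hx => (hCθ x hx).trans (hθQ x hx)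
  · have hθle : θ xbar lamhat muhat ≤ L yhat xbar := by
      rw [hθ]
      exact csInf_le ⟨C xbar, hlb xbar hxbar⟩ ⟨yhat, hyhatY, (hL yhat xbar).symm⟩
    have hCxbar : C xbar = L yhat xbar - η := by
      rw [hC]; simp
    linarith [hdualopt]
end

section
/- In the setting of the inexact cut for a parametric convex program with variable feasible set, assume additionally that $\nabla_y f(\cdot, x)$ is $M_1$-Lipschitz and each $\nabla_y g_i(\cdot, x)$ is $M_2$-Lipschitz on $Y$ uniformly in $x \in X$, and that the $\ell_1$-norm of the approximate dual multiplier satisfies $\|\hat\mu\|_1 \le \mathcal{U}$. Set $M_3 = M_1 + \mathcal{U} M_2$, $D = \mathrm{Diam}(Y)$, and $\ell = \max_{y \in Y}\langle \nabla_y L_{\bar x}(\hat y, \hat\lambda, \hat\mu), \hat y - y\rangle$. Then $\mathcal{Q}(\bar x) - \mathcal{C}(\bar x) \le \varepsilon + \ell - \frac{\ell^2}{2 M_3 D^2}$ if $\ell \le M_3 D^2$, and $\mathcal{Q}(\bar x) - \mathcal{C}(\bar x) \le \varepsilon + \frac{\ell}{2}$ otherwise. -/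
open Set
open scoped RealInnerProductSpace
set_option maxHeartbeats 1000000

/-- Inexact cut for the value function of a parametric convex program with
variable feasible set: refined gap bound under Lipschitz gradients
(Proposition `varprop2`). -/
theorem stmt_4 {n m q p : ℕ}
    (X : Set (EuclideanSpace ℝ (Fin m))) (Y : Set (EuclideanSpace ℝ (Fin n)))
    (hXne : X.Nonempty) (hXcv : Convex ℝ X) (hXcp : IsCompact X)
    (hYne : Y.Nonempty) (hYcv : Convex ℝ Y) (hYcp : IsCompact Y)
    (A : EuclideanSpace ℝ (Fin n) →L[ℝ] EuclideanSpace ℝ (Fin q))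
    (B : EuclideanSpace ℝ (Fin m) →L[ℝ] EuclideanSpace ℝ (Fin q))
    (b : EuclideanSpace ℝ (Fin q))
    (f : EuclideanSpace ℝ (Fin n) × EuclideanSpace ℝ (Fin m) → ℝ)
    (g : Fin p → EuclideanSpace ℝ (Fin n) × EuclideanSpace ℝ (Fin m) → ℝ)
    -- partial gradients and joint differentiability of `f` and of each `g i` on `Y ×ˢ X`
    (Gfy : EuclideanSpace ℝ (Fin n) × EuclideanSpace ℝ (Fin m) → EuclideanSpace ℝ (Fin n))
    (Gfx : EuclideanSpace ℝ (Fin n) × EuclideanSpace ℝ (Fin m) → EuclideanSpace ℝ (Fin m))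
    (Ggy : Fin p → EuclideanSpace ℝ (Fin n) × EuclideanSpace ℝ (Fin m) → EuclideanSpace ℝ (Fin n))
    (Ggx : Fin p → EuclideanSpace ℝ (Fin n) × EuclideanSpace ℝ (Fin m) → EuclideanSpace ℝ (Fin m))
    (Df : EuclideanSpace ℝ (Fin n) × EuclideanSpace ℝ (Fin m) →
          EuclideanSpace ℝ (Fin n) × EuclideanSpace ℝ (Fin m) →L[ℝ] ℝ)
    (Dg : Fin p → EuclideanSpace ℝ (Fin n) × EuclideanSpace ℝ (Fin m) →
          EuclideanSpace ℝ (Fin n) × EuclideanSpace ℝ (Fin m) →L[ℝ] ℝ)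
    (hfconv : ConvexOn ℝ (Y ×ˢ X) f)
    (hgconv : ∀ i, ConvexOn ℝ (Y ×ˢ X) (g i))
    (hfdiff : ∀ z ∈ Y ×ˢ X, HasFDerivAt f (Df z) z)
    (hfgrad : ∀ z ∈ Y ×ˢ X, ∀ v, Df z v = ⟪Gfy z, v.1⟫ + ⟪Gfx z, v.2⟫)
    (hgdiff : ∀ i, ∀ z ∈ Y ×ˢ X, HasFDerivAt (g i) (Dg i z) z)
    (hggrad : ∀ i, ∀ z ∈ Y ×ˢ X, ∀ v, Dg i z v = ⟪Ggy i z, v.1⟫ + ⟪Ggx i z, v.2⟫)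
    (M₁ M₂ U : ℝ) (hM₁ : 0 < M₁) (hM₂ : 0 < M₂)
    (hLipf : ∀ x ∈ X, ∀ y₁ ∈ Y, ∀ y₂ ∈ Y,
      ‖Gfy (y₂, x) - Gfy (y₁, x)‖ ≤ M₁ * ‖y₂ - y₁‖)
    (hLipg : ∀ i, ∀ x ∈ X, ∀ y₁ ∈ Y, ∀ y₂ ∈ Y,
      ‖Ggy i (y₂, x) - Ggy i (y₁, x)‖ ≤ M₂ * ‖y₂ - y₁‖)
    -- value function, feasible set, dual function
    (S : EuclideanSpace ℝ (Fin m) → Set (EuclideanSpace ℝ (Fin n)))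
    (hS : ∀ x, S x = {y ∈ Y | A y + B x = b ∧ ∀ i, g (i) (y, x) ≤ 0})
    (Q : EuclideanSpace ℝ (Fin m) → ℝ)
    (hQ : ∀ x ∈ X, Q x = sInf ((fun y => f (y, x)) '' S x))
    (θ : EuclideanSpace ℝ (Fin m) → EuclideanSpace ℝ (Fin q) → (Fin p → ℝ) → ℝ)
    (hθ : ∀ x lam mu, θ x lam mu =
      sInf ((fun y => f (y, x) + ⟪lam, A y + B x - b⟫ + ∑ i, mu i * g i (y, x)) '' Y))
    -- strong duality at every `x ∈ X`
    (hstrong : ∀ x ∈ X,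
      IsLUB {v : ℝ | ∃ lam mu, (∀ i, 0 ≤ mu i) ∧ v = θ x lam mu} (Q x))
    (xbar : EuclideanSpace ℝ (Fin m)) (hxbar : xbar ∈ X)
    (ε : ℝ) (hε : 0 ≤ ε)
    -- `ε`-optimal feasible primal solution
    (yhat : EuclideanSpace ℝ (Fin n)) (hyhatfeas : yhat ∈ S xbar)
    (hyhatopt : f (yhat, xbar) ≤ Q xbar + ε)
    -- `ε`-optimal feasible dual solution
    (lamhat : EuclideanSpace ℝ (Fin q)) (muhat : Fin p → ℝ)
    (hmuhat : ∀ i, 0 ≤ muhat i)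
    (hdualopt : θ xbar lamhat muhat ≥ Q xbar - ε)
    (hU : ∑ i, |muhat i| ≤ U)
    -- Lagrangian at `x̄`, its value and gradient at `ŷ`
    (L : EuclideanSpace ℝ (Fin n) → EuclideanSpace ℝ (Fin m) → ℝ)
    (hL : ∀ y x, L y x = f (y, x) + ⟪lamhat, A y + B x - b⟫ + ∑ i, muhat i * g i (y, x))
    (GLy : EuclideanSpace ℝ (Fin n)) (GLx : EuclideanSpace ℝ (Fin m))
    (hGLy : GLy = Gfy (yhat, xbar) + (ContinuousLinearMap.adjoint A) lamhat
      + ∑ i, muhat i • Ggy i (yhat, xbar))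
    (hGLx : GLx = Gfx (yhat, xbar) + (ContinuousLinearMap.adjoint B) lamhat
      + ∑ i, muhat i • Ggx i (yhat, xbar))
    (ℓ : ℝ)
    (hℓ : IsGreatest ((fun y => ⟪GLy, yhat - y⟫) '' Y) ℓ)
    (M₃ : ℝ) (hM₃ : M₃ = M₁ + U * M₂)
    (C : EuclideanSpace ℝ (Fin m) → ℝ)
    (hC : ∀ x, C x = L yhat xbar - ℓ + ⟪GLx, x - xbar⟫) :
    (ℓ ≤ M₃ * (Metric.diam Y) ^ 2 →
        Q xbar - C xbar ≤ ε + ℓ - ℓ ^ 2 / (2 * M₃ * (Metric.diam Y) ^ 2)) ∧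
    (M₃ * (Metric.diam Y) ^ 2 < ℓ →
        Q xbar - C xbar ≤ ε + ℓ / 2) := by
  classical
  -- basic setup
  set D := Metric.diam Y with hD
  have hyhatY : yhat ∈ Y := by rw [hS] at hyhatfeas; exact hyhatfeas.1
  have hℓ0 : 0 ≤ ℓ := by
    have h0 : (0:ℝ) ∈ (fun y => ⟪GLy, yhat - y⟫) '' Y := ⟨yhat, hyhatY, by simp⟩
    exact hℓ.2 h0
  obtain ⟨ystar, hystarY, hystar⟩ := hℓ.1
  set d := ystar - yhat with hd
  have hdD : ‖d‖ ≤ D := by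
    have := Metric.dist_le_diam_of_mem hYcp.isBounded hystarY hyhatY
    simpa [hd, dist_eq_norm] using this
  have hD0 : 0 ≤ D := Metric.diam_nonneg
  have hsumU : ∑ i, muhat i ≤ U := by
    calc ∑ i, muhat i = ∑ i, |muhat i| := by
          exact Finset.sum_congr rfl fun i _ => (abs_of_nonneg (hmuhat i)).symm
      _ ≤ U := hU
  have hU0 : 0 ≤ U :=
    le_trans (Finset.sum_nonneg fun i _ => hmuhat i) hsumU
  have hM₃0 : 0 < M₃ := by rw [hM₃]; positivity
  -- membership of the segment
  have ymem : ∀ s ∈ Icc (0:ℝ) 1, yhat + s • d ∈ Y := by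
    intro s hs
    have h : yhat + s • d = (1 - s) • yhat + s • ystar := by
      rw [hd]; module
    rw [h]
    exact hYcv hyhatY hystarY (by linarith [hs.2]) hs.1 (by ring)
  -- the gradient map of the Lagrangian in y
  set Gy : EuclideanSpace ℝ (Fin n) → EuclideanSpace ℝ (Fin n) :=
    fun y => Gfy (y, xbar) + (ContinuousLinearMap.adjoint A) lamhat
      + ∑ i, muhat i • Ggy i (y, xbar) with hGy
  have hGLyGy : GLy = Gy yhat := by rw [hGLy, hGy]
  -- Lipschitz bound for Gy
  have GyLip : ∀ y₁ ∈ Y, ∀ y₂ ∈ Y, ‖Gy y₂ - Gy y₁‖ ≤ M₃ * ‖y₂ - y₁‖ := by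
    intro y₁ hy₁ y₂ hy₂
    have hdiff : Gy y₂ - Gy y₁ = (Gfy (y₂, xbar) - Gfy (y₁, xbar))
        + ∑ i, muhat i • (Ggy i (y₂, xbar) - Ggy i (y₁, xbar)) := by
      rw [hGy]
      simp only [smul_sub, Finset.sum_sub_distrib]
      abel
    rw [hdiff]
    have h1 : ‖∑ i, muhat i • (Ggy i (y₂, xbar) - Ggy i (y₁, xbar))‖
        ≤ (∑ i, muhat i) * (M₂ * ‖y₂ - y₁‖) := by
      calc ‖∑ i, muhat i • (Ggy i (y₂, xbar) - Ggy i (y₁, xbar))‖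
          ≤ ∑ i, ‖muhat i • (Ggy i (y₂, xbar) - Ggy i (y₁, xbar))‖ := norm_sum_le _ _
        _ ≤ ∑ i, muhat i * (M₂ * ‖y₂ - y₁‖) := by
            apply Finset.sum_le_sum
            intro i _
            rw [norm_smul, Real.norm_eq_abs, abs_of_nonneg (hmuhat i)]
            exact mul_le_mul_of_nonneg_left (hLipg i xbar hxbar y₁ hy₁ y₂ hy₂) (hmuhat i)
        _ = (∑ i, muhat i) * (M₂ * ‖y₂ - y₁‖) := by rw [Finset.sum_mul]
    have h2 : (∑ i, muhat i) * (M₂ * ‖y₂ - y₁‖) ≤ U * (M₂ * ‖y₂ - y₁‖) := by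
      apply mul_le_mul_of_nonneg_right hsumU
      positivity
    calc ‖(Gfy (y₂, xbar) - Gfy (y₁, xbar))
        + ∑ i, muhat i • (Ggy i (y₂, xbar) - Ggy i (y₁, xbar))‖
        ≤ ‖Gfy (y₂, xbar) - Gfy (y₁, xbar)‖
          + ‖∑ i, muhat i • (Ggy i (y₂, xbar) - Ggy i (y₁, xbar))‖ := norm_add_le _ _
      _ ≤ M₁ * ‖y₂ - y₁‖ + U * (M₂ * ‖y₂ - y₁‖) :=
          add_le_add (hLipf xbar hxbar y₁ hy₁ y₂ hy₂) (le_trans h1 h2)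
      _ = M₃ * ‖y₂ - y₁‖ := by rw [hM₃]; ring
  -- derivative of s ↦ L (yhat + s • d) xbar
  have hc : ∀ s : ℝ, HasDerivAt (fun s : ℝ => yhat + s • d) d s := by
    intro s
    simpa using ((hasDerivAt_id s).smul_const d).const_add yhat
  have hhd : ∀ s ∈ Icc (0:ℝ) 1,
      HasDerivAt (fun s : ℝ => L (yhat + s • d) xbar) (⟪Gy (yhat + s • d), d⟫) s := by
    intro s hs
    have hyY : yhat + s • d ∈ Y := ymem s hs
    have hmem : ((yhat + s • d, xbar) : _ × _) ∈ Y ×ˢ X := ⟨hyY, hxbar⟩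
    have hγ : HasDerivAt (fun s : ℝ => ((yhat + s • d, xbar) : _ × _))
        ((d, 0) : EuclideanSpace ℝ (Fin n) × EuclideanSpace ℝ (Fin m)) s :=
      (hc s).prodMk (hasDerivAt_const s xbar)
    have h1 : HasDerivAt (fun s : ℝ => f (yhat + s • d, xbar))
        (⟪Gfy (yhat + s • d, xbar), d⟫) s := by
      have := (hfdiff _ hmem).comp_hasDerivAt s hγ
      have hval : Df (yhat + s • d, xbar) (d, 0) = ⟪Gfy (yhat + s • d, xbar), d⟫ := by
        rw [hfgrad _ hmem]; simp
      rw [hval] at this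
      exact this
    have h2 : HasDerivAt (fun s : ℝ => ⟪lamhat, A (yhat + s • d) + B xbar - b⟫)
        (⟪lamhat, A d⟫) s := by
      have hA : HasDerivAt (fun s : ℝ => A (yhat + s • d) + B xbar - b) (A d) s := by
        have := (A.hasFDerivAt.comp_hasDerivAt s (hc s))
        simpa using (this.add_const (B xbar)).sub_const b
      have := (hasDerivAt_const s lamhat).inner ℝ hA
      simpa using this
    have h3 : HasDerivAt (fun s : ℝ => ∑ i, muhat i * g i (yhat + s • d, xbar))
        (∑ i, muhat i * ⟪Ggy i (yhat + s • d, xbar), d⟫) s := by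
      apply HasDerivAt.fun_sum
      intro i _
      have := ((hgdiff i _ hmem).comp_hasDerivAt s hγ).const_mul (muhat i)
      have hval : Dg i (yhat + s • d, xbar) (d, 0) = ⟪Ggy i (yhat + s • d, xbar), d⟫ := by
        rw [hggrad i _ hmem]; simp
      rw [hval] at this
      exact this
    have htot := (h1.add h2).add h3
    have hfun : (fun s : ℝ => L (yhat + s • d) xbar) =
        fun s : ℝ => f (yhat + s • d, xbar) + ⟪lamhat, A (yhat + s • d) + B xbar - b⟫
          + ∑ i, muhat i * g i (yhat + s • d, xbar) := by
      funext s; rw [hL]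
    rw [hfun]
    have hder : ⟪Gy (yhat + s • d), d⟫ =
        ⟪Gfy (yhat + s • d, xbar), d⟫ + ⟪lamhat, A d⟫
          + ∑ i, muhat i * ⟪Ggy i (yhat + s • d, xbar), d⟫ := by
      rw [hGy]
      simp only [inner_add_left, sum_inner, real_inner_smul_left,
        ContinuousLinearMap.adjoint_inner_left]
    rw [hder]
    exact htot
  -- the inner product at yhat
  have hGyd : ⟪Gy yhat, d⟫ = -ℓ := by
    have hystar' : ⟪GLy, yhat - ystar⟫ = ℓ := hystar
    rw [← hGLyGy, hd]
    rw [show ystar - yhat = -(yhat - ystar) by abel, inner_neg_right, hystar']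
  -- descent function
  set F : ℝ → ℝ := fun s => L (yhat + s • d) xbar + s * ℓ - M₃ / 2 * s ^ 2 * ‖d‖ ^ 2 with hF
  have hFd : ∀ s ∈ Icc (0:ℝ) 1,
      HasDerivAt F (⟪Gy (yhat + s • d), d⟫ + ℓ - M₃ * s * ‖d‖ ^ 2) s := by
    intro s hs
    have h1 := (hhd s hs).add ((hasDerivAt_id s).mul_const ℓ)
    have h2 : HasDerivAt (fun s : ℝ => M₃ / 2 * s ^ 2 * ‖d‖ ^ 2)
        (M₃ * s * ‖d‖ ^ 2) s := by
      have := ((hasDerivAt_pow 2 s).const_mul (M₃ / 2)).mul_const (‖d‖ ^ 2)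
      exact this.congr_deriv (by ring)
    have := h1.sub h2
    simp only [one_mul] at this
    exact this
  have hanti : AntitoneOn F (Icc 0 1) := by
    apply antitoneOn_of_deriv_nonpos (convex_Icc 0 1)
    · intro s hs
      exact (hFd s hs).continuousAt.continuousWithinAt
    · intro s hs
      rw [interior_Icc] at hs
      exact (hFd s (Ioo_subset_Icc_self hs)).differentiableAt.differentiableWithinAt
    · intro s hs
      rw [interior_Icc] at hs
      rw [(hFd s (Ioo_subset_Icc_self hs)).deriv]
      have hyY : yhat + s • d ∈ Y := ymem s (Ioo_subset_Icc_self hs)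
      have hip : ⟪Gy (yhat + s • d) - Gy yhat, d⟫ ≤ M₃ * s * ‖d‖ ^ 2 := by
        calc ⟪Gy (yhat + s • d) - Gy yhat, d⟫
            ≤ ‖Gy (yhat + s • d) - Gy yhat‖ * ‖d‖ := real_inner_le_norm _ _
          _ ≤ (M₃ * ‖(yhat + s • d) - yhat‖) * ‖d‖ := by
              apply mul_le_mul_of_nonneg_right _ (norm_nonneg _)
              exact GyLip yhat hyhatY _ hyY
          _ = M₃ * s * ‖d‖ ^ 2 := by
              rw [show (yhat + s • d) - yhat = s • d by abel, norm_smul,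
                Real.norm_eq_abs, abs_of_nonneg (le_of_lt hs.1)]
              ring
      have hsplit : ⟪Gy (yhat + s • d), d⟫ = ⟪Gy (yhat + s • d) - Gy yhat, d⟫ + ⟪Gy yhat, d⟫ := by
        rw [inner_sub_left]; ring
      rw [hsplit, hGyd]
      linarith
  -- continuity of y ↦ L y xbar on Y, bddBelow of its image
  have hcont : ContinuousOn (fun y => L y xbar) Y := by
    intro y hy
    have hmem : ((y, xbar) : _ × _) ∈ Y ×ˢ X := ⟨hy, hxbar⟩
    have hpair : ContinuousAt (fun y' : EuclideanSpace ℝ (Fin n) => ((y', xbar) : _ × _)) y :=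
      (continuous_id.prodMk continuous_const).continuousAt
    have h1 : ContinuousAt (fun y' => f (y', xbar)) y :=
      Filter.Tendsto.comp (hfdiff _ hmem).continuousAt hpair
    have h2 : ContinuousAt (fun y' => ⟪lamhat, A y' + B xbar - b⟫) y := by
      have hA : Continuous fun y' : EuclideanSpace ℝ (Fin n) => A y' + B xbar - b :=
        (A.continuous.add continuous_const).sub continuous_const
      exact (continuous_const.inner hA).continuousAt
    have h3 : ContinuousAt (fun y' => ∑ i, muhat i * g i (y', xbar)) y := by
      exact tendsto_finset_sum _ fun i _ =>
        continuousAt_const.mul (Filter.Tendsto.comp (hgdiff i _ hmem).continuousAt hpair)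
    have : ContinuousAt (fun y' => f (y', xbar) + ⟪lamhat, A y' + B xbar - b⟫
        + ∑ i, muhat i * g i (y', xbar)) y := (h1.add h2).add h3
    have hfun : (fun y' => L y' xbar) = fun y' => f (y', xbar)
        + ⟪lamhat, A y' + B xbar - b⟫ + ∑ i, muhat i * g i (y', xbar) := by
      funext y'; rw [hL]
    rw [hfun]
    exact this.continuousWithinAt
  have hbdd : BddBelow ((fun y => L y xbar) '' Y) :=
    (hYcp.image_of_continuousOn hcont).bddBelow
  have hθL : θ xbar lamhat muhat = sInf ((fun y => L y xbar) '' Y) := by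
    rw [hθ]
    congr 1
    apply image_congr
    intro y _
    rw [hL]
  -- main bound for each t ∈ [0,1]
  have hCx : C xbar = L yhat xbar - ℓ := by rw [hC]; simp
  have key : ∀ t ∈ Icc (0:ℝ) 1,
      Q xbar - C xbar ≤ ε + ℓ - t * ℓ + M₃ / 2 * t ^ 2 * ‖d‖ ^ 2 := by
    intro t ht
    have hFt : F t ≤ F 0 := hanti (left_mem_Icc.2 zero_le_one) ht ht.1
    have hF0 : F 0 = L yhat xbar := by simp [hF]
    have hθle : θ xbar lamhat muhat ≤ L (yhat + t • d) xbar := by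
      rw [hθL]
      exact csInf_le hbdd ⟨yhat + t • d, ymem t ht, rfl⟩
    have hFt' : L (yhat + t • d) xbar + t * ℓ - M₃ / 2 * t ^ 2 * ‖d‖ ^ 2 ≤ L yhat xbar := by
      rw [← hF0]; exact hFt
    have hQ' : Q xbar ≤ θ xbar lamhat muhat + ε := by linarith [hdualopt]
    rw [hCx]
    linarith
  have hd2 : ‖d‖ ^ 2 ≤ D ^ 2 := by nlinarith [norm_nonneg d]
  constructor
  · -- case ℓ ≤ M₃ D²
    intro hle
    rcases eq_or_lt_of_le hD0 with hDz | hDp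
    · -- D = 0
      have hℓz : ℓ = 0 := by
        rw [← hDz] at hle
        simp only [ne_eq, OfNat.ofNat_ne_zero, not_false_eq_true, zero_pow, mul_zero] at hle
        exact le_antisymm hle hℓ0
      have := key 0 (left_mem_Icc.2 zero_le_one)
      simp only [hℓz] at this ⊢
      simpa using this
    · set t := ℓ / (M₃ * D ^ 2) with htdef
      have hpos : 0 < M₃ * D ^ 2 := by positivity
      have ht : t ∈ Icc (0:ℝ) 1 :=
        ⟨div_nonneg hℓ0 hpos.le, (div_le_one hpos).2 hle⟩
      have hk := key t ht
      have hmono : M₃ / 2 * t ^ 2 * ‖d‖ ^ 2 ≤ M₃ / 2 * t ^ 2 * D ^ 2 := by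
        apply mul_le_mul_of_nonneg_left hd2
        positivity
      have heq : ε + ℓ - t * ℓ + M₃ / 2 * t ^ 2 * D ^ 2
          = ε + ℓ - ℓ ^ 2 / (2 * M₃ * D ^ 2) := by
        rw [htdef]
        field_simp
        ring
      linarith
  · -- case M₃ D² < ℓ
    intro hgt
    have hk := key 1 (right_mem_Icc.2 zero_le_one)
    have : M₃ / 2 * 1 ^ 2 * ‖d‖ ^ 2 ≤ M₃ / 2 * D ^ 2 := by nlinarith
    linarith
end

section
/- Let $\mathcal{X}_{t-1}, \mathcal{X}_t$ be nonempty convex compact sets, $\varepsilon > 0$, and suppose: each component of $g_t$ is convex on $\mathcal{X}_t \times \mathcal{X}_{t-1}^{\varepsilon}$ (the $\varepsilon$-fattening); for every $x_{t-1} \in \mathcal{X}_{t-1}^{\varepsilon}$ there exists $x_t \in \mathrm{ri}(\mathcal{X}_t)$ with $A_t x_t + B_t x_{t-1} = b_t$ and $g_t(x_t, x_{t-1}) \le 0$; and there exists $(\bar x_{tt}, \bar x_{t,t-1}) \in \mathrm{ri}(\mathcal{X}_t) \times \mathcal{X}_{t-1}$ with $A_t \bar x_{tt} + B_t \bar x_{t,t-1}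 = b_t$ and $g_t(\bar x_{tt}, \bar x_{t,t-1}) < 0$. Then for every $x_{t-1}^k \in \mathcal{X}_{t-1}$ there exists $\tilde x_t \in \mathrm{ri}(\mathcal{X}_t)$ with $A_t \tilde x_t + B_t x_{t-1}^k = b_t$ and $g_t(\tilde x_t, x_{t-1}^k) < 0$. -/
open Set Metric

set_option maxHeartbeats 1000000 in
lemma mem_intrinsicInterior_iff_aux {E : Type*} [NormedAddCommGroup E] [NormedSpace ℝ E]
    {s : Set E} {x : E} :
    x ∈ intrinsicInterior ℝ s ↔
      x ∈ affineSpan ℝ s ∧ ∃ δ > 0, ∀ p, p ∈ affineSpan ℝ s → dist p x < δ → p ∈ s := by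
  constructor
  · rintro ⟨⟨z, hz⟩, hzint, rfl⟩
    refine ⟨hz, ?_⟩
    rw [mem_interior_iff_mem_nhds, Metric.mem_nhds_iff] at hzint
    obtain ⟨δ, hδ, hball⟩ := hzint
    refine ⟨δ, hδ, fun p hp hdist => ?_⟩
    exact hball (show (⟨p, hp⟩ : affineSpan ℝ s) ∈ Metric.ball ⟨z, hz⟩ δ by
      simpa [Metric.mem_ball, Subtype.dist_eq] using hdist)
  · rintro ⟨hx, δ, hδ, h⟩
    refine ⟨⟨x, hx⟩, ?_, rfl⟩
    rw [mem_interior_iff_mem_nhds, Metric.mem_nhds_iff]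
    exact ⟨δ, hδ, fun q hq => h q q.2 (by simpa [Metric.mem_ball, Subtype.dist_eq] using hq)⟩

set_option maxHeartbeats 1000000 in
lemma intrinsicInterior_combo {E : Type*} [NormedAddCommGroup E] [NormedSpace ℝ E]
    {s : Set E} (hs : Convex ℝ s)
    {a y : E} (ha : a ∈ intrinsicInterior ℝ s) (hy : y ∈ s)
    {t : ℝ} (ht0 : 0 < t) (ht1 : t ≤ 1) :
    t • a + (1 - t) • y ∈ intrinsicInterior ℝ s := by
  rw [mem_intrinsicInterior_iff_aux] at ha ⊢
  obtain ⟨haspan, δ, hδ, hball⟩ := ha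
  have hyspan : y ∈ affineSpan ℝ s := subset_affineSpan ℝ s hy
  set c := t • a + (1 - t) • y with hc
  have hcspan : c ∈ affineSpan ℝ s := by
    have h := AffineSubspace.smul_vsub_vadd_mem (affineSpan ℝ s) t haspan hyspan hyspan
    have he : t • (a -ᵥ y) +ᵥ y = c := by
      rw [hc]; simp only [vsub_eq_sub, vadd_eq_add]; module
    rwa [he] at h
  refine ⟨hcspan, t * δ, by positivity, fun p hp hdist => ?_⟩
  set q := (1 / t) • (p - c) + a with hq
  have hqspan : q ∈ affineSpan ℝ s := by
    have h := AffineSubspace.smul_vsub_vadd_mem (affineSpan ℝ s) (1 / t) hp hcspan haspan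
    have he : (1 / t) • (p -ᵥ c) +ᵥ a = q := by
      rw [hq]; simp only [vsub_eq_sub, vadd_eq_add]
    rwa [he] at h
  have hqdist : dist q a < δ := by
    have h1 : dist q a = (1 / t) * dist p c := by
      rw [dist_eq_norm, dist_eq_norm]
      simp only [hq, add_sub_cancel_right]
      rw [norm_smul, Real.norm_eq_abs, abs_of_pos (by positivity : (0:ℝ) < 1 / t)]
    rw [h1]
    calc (1 / t) * dist p c < (1 / t) * (t * δ) :=
          mul_lt_mul_of_pos_left hdist (by positivity)
      _ = δ := by field_simp
  have hqs : q ∈ s := hball q hqspan hqdist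
  have hpc : p = t • q + (1 - t) • y := by
    rw [hq, hc]
    rw [smul_add, smul_smul, mul_one_div, div_self ht0.ne']
    module
  rw [hpc]
  exact hs hqs hy ht0.le (by linarith) (by ring)

/-- Propagation of a Slater condition (Lemma `boundcutcoeff`): a single strictly
feasible pair plus relaxed feasibility on an `ε`-fattened parameter set yields a
Slater point at every parameter value. -/
theorem stmt_9 {n q p : ℕ}
    (Xprev Xt : Set (EuclideanSpace ℝ (Fin n)))
    (hXprevne : Xprev.Nonempty) (hXprevcv : Convex ℝ Xprev) (hXprevcp : IsCompact Xprev)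
    (hXtne : Xt.Nonempty) (hXtcv : Convex ℝ Xt) (hXtcp : IsCompact Xt)
    (ε : ℝ) (hε : 0 < ε)
    (Xprevε : Set (EuclideanSpace ℝ (Fin n)))
    (hXprevε : Xprevε = {x | ∃ u ∈ Xprev, ‖x - u‖ ≤ ε})
    (A B : EuclideanSpace ℝ (Fin n) →L[ℝ] EuclideanSpace ℝ (Fin q))
    (b : EuclideanSpace ℝ (Fin q))
    (g : Fin p → EuclideanSpace ℝ (Fin n) × EuclideanSpace ℝ (Fin n) → ℝ)
    (hgconv : ∀ i, ConvexOn ℝ (Xt ×ˢ Xprevε) (g i))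
    (hfeas : ∀ x ∈ Xprevε, ∃ y ∈ intrinsicInterior ℝ Xt,
      A y + B x = b ∧ ∀ i, g i (y, x) ≤ 0)
    (xbt : EuclideanSpace ℝ (Fin n)) (xbprev : EuclideanSpace ℝ (Fin n))
    (hxbt : xbt ∈ intrinsicInterior ℝ Xt) (hxbprev : xbprev ∈ Xprev)
    (hxbeq : A xbt + B xbprev = b) (hxblt : ∀ i, g i (xbt, xbprev) < 0) :
    ∀ xk ∈ Xprev, ∃ xtil ∈ intrinsicInterior ℝ Xt,
      A xtil + B xk = b ∧ ∀ i, g i (xtil, xk) < 0 := by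
  intro xk hxk
  by_cases hcase : xk = xbprev
  · exact ⟨xbt, hxbt, by rw [hcase]; exact hxbeq, by rw [hcase]; exact hxblt⟩
  have hdpos : 0 < ‖xk - xbprev‖ := by
    simpa using sub_ne_zero.mpr hcase
  set d := ‖xk - xbprev‖ with hd
  set z : EuclideanSpace ℝ (Fin n) := xk + (ε / d) • (xk - xbprev) with hz
  have hzmem : z ∈ Xprevε := by
    rw [hXprevε]
    refine ⟨xk, hxk, ?_⟩
    have h1 : z - xk = (ε / d) • (xk - xbprev) := by rw [hz]; abel
    rw [h1, norm_smul, Real.norm_eq_abs, abs_of_pos (by positivity), ← hd]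
    rw [div_mul_cancel₀ _ hdpos.ne']
  obtain ⟨y, hy, hyeq, hyle⟩ := hfeas z hzmem
  set lam := d / (d + ε) with hlam
  have hdε : 0 < d + ε := by positivity
  have hlam0 : 0 < lam := by positivity
  have hlam1 : lam < 1 := by
    rw [hlam, div_lt_one hdε]; linarith
  set xtil := lam • y + (1 - lam) • xbt with hxtil
  have combo : lam • z + (1 - lam) • xbprev = xk := by
    rw [hz, hlam]
    match_scalars <;> field_simp <;> ring
  have hxtilmem : xtil ∈ intrinsicInterior ℝ Xt := by
    have h := intrinsicInterior_combo hXtcv hxbt (intrinsicInterior_subset hy) (t := 1 - lam)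
      (by linarith) (by linarith)
    have h2 : (1 - lam) • xbt + (1 - (1 - lam)) • y = xtil := by
      rw [hxtil]; module
    rwa [h2] at h
  refine ⟨xtil, hxtilmem, ?_, ?_⟩
  · have h : A xtil + B xk = lam • (A y + B z) + (1 - lam) • (A xbt + B xbprev) := by
      rw [hxtil, ← combo]
      simp only [map_add, map_smul]
      module
    rw [h, hyeq, hxbeq]
    module
  · intro i
    have hmem1 : ((y, z) : EuclideanSpace ℝ (Fin n) × EuclideanSpace ℝ (Fin n)) ∈ Xt ×ˢ Xprevε :=
      ⟨intrinsicInterior_subset hy, hzmem⟩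
    have hmem2 : ((xbt, xbprev) : EuclideanSpace ℝ (Fin n) × EuclideanSpace ℝ (Fin n)) ∈ Xt ×ˢ Xprevε :=
      ⟨intrinsicInterior_subset hxbt, by rw [hXprevε]; exact ⟨xbprev, hxbprev, by simp [hε.le]⟩⟩
    have hcvx := (hgconv i).2 hmem1 hmem2 hlam0.le
      (by linarith : (0:ℝ) ≤ 1 - lam) (by ring : lam + (1 - lam) = 1)
    have heq : lam • ((y, z) : EuclideanSpace ℝ (Fin n) × EuclideanSpace ℝ (Fin n))
        + (1 - lam) • (xbt, xbprev) = (xtil, xk) := by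
      rw [Prod.smul_mk, Prod.smul_mk, Prod.mk_add_mk, combo, hxtil]
    rw [heq] at hcvx
    simp only [smul_eq_mul] at hcvx
    have h1 : lam * g i (y, z) ≤ 0 := mul_nonpos_of_nonneg_of_nonpos hlam0.le (hyle i)
    have h2 : (1 - lam) * g i (xbt, xbprev) < 0 :=
      mul_neg_of_pos_of_neg (by linarith) (hxblt i)
    linarith
end

section
/- Consider dynamic programming equations $\mathcal{Q}_t(x_{t-1}) = \inf\{f_t(x_t, x_{t-1}) + \mathcal{Q}_{t+1}(x_t) : x_t \in X_t(x_{t-1})\}$ for $t = 1, \ldots, T$ with $\mathcal{Q}_{T+1} \equiv 0$, where each $\mathcal{X}_t$ is nonempty convex compact, each $f_t$ is convex and continuously differentiable on $\mathcal{X}_t \times \mathcal{X}_{t-1}$, and for constraint sets of type S2 the functions $g_{ti}$ are convex and continuously differentiable, with $X_t(x_{t-1}) \cap \mathrm{ri}(\mathcal{X}_t) \ne \emptyset$ for all $x_{t-1}$ in an $\varepsilon$-fattening of $\mathcal{X}_{t-1}$. Then for every $t = 2, \ldots, T+1$, the function $\mathcal{Q}_t$ is convex and Lipschitz continuous on $\mathcal{X}_{t-1}$.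 -/
open Set Metric


lemma chain_lip {E F : Type*} [NormedAddCommGroup E] [NormedSpace ℝ E]
    [PseudoMetricSpace F] {f : E → F} {s : Set E} (hs : Convex ℝ s)
    {K : ℝ} (hK : 0 ≤ K) {r : ℝ} (hr : 0 < r)
    (h : ∀ y ∈ s, ∀ z ∈ s, dist y z < r → dist (f y) (f z) ≤ K * dist y z) :
    ∀ y ∈ s, ∀ z ∈ s, dist (f y) (f z) ≤ K * dist y z := by
  intro y hy z hz
  obtain ⟨N, hN⟩ := exists_nat_gt (dist y z / r)
  have hN0 : 0 < (N : ℝ) := lt_of_le_of_lt (div_nonneg dist_nonneg hr.le) hN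
  have hd : dist y z < N * r := by rw [div_lt_iff₀ hr] at hN; linarith
  set d := dist y z with hdd
  have hdnn : 0 ≤ d := dist_nonneg
  set p : ℕ → E := fun k => y + ((k : ℝ)/N) • (z - y) with hp
  have hmem : ∀ k : ℕ, (k : ℝ) ≤ N → p k ∈ s := by
    intro k hk
    have h0 : (0:ℝ) ≤ (k:ℝ)/N := div_nonneg (Nat.cast_nonneg k) hN0.le
    have h1 : (k:ℝ)/N ≤ 1 := (div_le_one hN0).mpr hk
    have hmem2 := hs hy hz (by linarith : (0:ℝ) ≤ 1 - (k:ℝ)/N) h0 (by ring)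
    convert hmem2 using 1
    simp only [hp]
    module
  have hdN : d / N < r := (div_lt_iff₀ hN0).mpr (by linarith)
  have hstep : ∀ k : ℕ, dist (p k) (p (k+1)) = d / N := by
    intro k
    have hsub : p (k+1) - p k = ((1:ℝ)/N) • (z - y) := by
      simp only [hp]
      push_cast
      module
    rw [dist_eq_norm, ← neg_sub, norm_neg, hsub, norm_smul, Real.norm_eq_abs,
      abs_of_nonneg (by positivity : (0:ℝ) ≤ 1/(N:ℝ)), hdd, dist_eq_norm, norm_sub_rev]
    ring
  have key : ∀ k : ℕ, (k:ℝ) ≤ N → dist (f y) (f (p k)) ≤ K * ((k:ℝ) * (d/N)) := by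
    intro k
    induction k with
    | zero =>
      intro _
      have hp0 : p 0 = y := by simp [hp]
      simp [hp0]
    | succ k ih =>
      intro hk1
      have hk : (k:ℝ) ≤ N := by push_cast at hk1 ⊢; linarith
      have h1 := ih hk
      have h2 := h (p k) (hmem k hk) (p (k+1)) (hmem (k+1) (by push_cast at hk1 ⊢; linarith))
        (by rw [hstep]; exact hdN)
      rw [hstep] at h2
      have h3 := dist_triangle (f y) (f (p k)) (f (p (k+1)))
      push_cast
      nlinarith [h2, h1, h3]
  have hfin := key N le_rfl
  have hpN : p N = z := by
    simp only [hp, div_self hN0.ne']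
    module
  rw [hpN] at hfin
  calc dist (f y) (f z) ≤ K * ((N:ℝ) * (d/N)) := hfin
    _ = K * d := by field_simp
lemma lip_of_C1 {E F : Type*} [NormedAddCommGroup E] [NormedSpace ℝ E]
    [NormedAddCommGroup F] [NormedSpace ℝ F] {f : E → F} {s : Set E}
    (hf : ContDiffOn ℝ 1 f s) (hs : Convex ℝ s) (hc : IsCompact s) :
    ∃ K : NNReal, LipschitzOnWith K f s := by
  rcases s.eq_empty_or_nonempty with hse | hne
  · exact ⟨0, by simp [hse]⟩
  have hloc : ∀ x ∈ s, ∃ r > 0, ∃ K : NNReal, LipschitzOnWith K f (ball x r ∩ s) := by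
    intro x hx
    obtain ⟨K, t, ht, hlip⟩ := (hf x hx).exists_lipschitzOnWith hs
    obtain ⟨r, hr, hrs⟩ := Metric.mem_nhdsWithin_iff.mp ht
    exact ⟨r, hr, K, hlip.mono hrs⟩
  choose! r hr K hK using hloc
  obtain ⟨t, hts, hcov⟩ := hc.elim_nhds_subcover (fun x => ball x (r x / 2))
    (fun x hx => ball_mem_nhds _ (by linarith [hr x hx]))
  have htne : t.Nonempty := by
    obtain ⟨x, hx⟩ := hne
    obtain ⟨i, hi, _⟩ := Set.mem_iUnion₂.mp (hcov hx)
    exact ⟨i, hi⟩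
  set Km : NNReal := t.sup K with hKm
  set rm : ℝ := t.inf' htne (fun x => r x / 2) with hrm
  have hrm0 : 0 < rm := by
    rw [hrm]
    apply Finset.lt_inf'_iff _ |>.mpr
    intro i hi
    linarith [hr i (hts i hi)]
  have hlocal : ∀ y ∈ s, ∀ z ∈ s, dist y z < rm → dist (f y) (f z) ≤ (Km:ℝ) * dist y z := by
    intro y hy z hz hdist
    obtain ⟨i, hi, hyi⟩ := Set.mem_iUnion₂.mp (hcov hy)
    have hyi' : dist y i < r i / 2 := mem_ball.mp hyi
    have hrmi : rm ≤ r i / 2 := Finset.inf'_le _ hi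
    have hzi : z ∈ ball i (r i) := by
      rw [mem_ball]
      calc dist z i ≤ dist z y + dist y i := dist_triangle _ _ _
        _ < rm + r i / 2 := by rw [dist_comm z y]; linarith
        _ ≤ r i := by linarith
    have hyi2 : y ∈ ball i (r i) := mem_ball.mpr (by linarith)
    have := (hK i (hts i hi)).dist_le_mul y ⟨hyi2, hy⟩ z ⟨hzi, hz⟩
    calc dist (f y) (f z) ≤ (K i : ℝ) * dist y z := this
      _ ≤ (Km:ℝ) * dist y z := by
        apply mul_le_mul_of_nonneg_right _ dist_nonneg
        exact_mod_cast NNReal.coe_le_coe.mpr (Finset.le_sup hi)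
  have hglob := chain_lip hs Km.coe_nonneg hrm0 hlocal
  exact ⟨Km, LipschitzOnWith.of_dist_le_mul fun x hx y hy => hglob x hx y hy⟩
lemma value_fun {E : Type*} [NormedAddCommGroup E] [NormedSpace ℝ E]
    (D P Pε : Set E) (hPconv : Convex ℝ P) (hPPε : P ⊆ Pε)
    (C : ℝ) (hC : ∀ y ∈ D, ∀ y' ∈ D, ‖y - y'‖ ≤ C)
    (ε : ℝ) (hε : 0 < ε) (hPε : ∀ x' ∈ P, ∀ x : E, ‖x - x'‖ ≤ ε → x ∈ Pε)
    (X : E → Set E) (hXD : ∀ x ∈ Pε, X x ⊆ D) (hXne : ∀ x ∈ Pε, (X x).Nonempty)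
    (hXconv : ∀ x₁ ∈ Pε, ∀ x₂ ∈ Pε, ∀ y₁ ∈ X x₁, ∀ y₂ ∈ X x₂, ∀ a b : ℝ,
      0 ≤ a → 0 ≤ b → a + b = 1 → a • y₁ + b • y₂ ∈ X (a • x₁ + b • x₂))
    (φ : E → E → ℝ)
    (m : ℝ) (hm : ∀ y ∈ D, ∀ x ∈ P, m ≤ φ y x)
    (L : ℝ) (hL : 0 ≤ L)
    (hLip : ∀ y ∈ D, ∀ y' ∈ D, ∀ x ∈ P, ∀ x' ∈ P,
      φ y x - φ y' x' ≤ L * (‖y - y'‖ + ‖x - x'‖))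
    (hφconv : ∀ y₁ ∈ D, ∀ y₂ ∈ D, ∀ x₁ ∈ P, ∀ x₂ ∈ P, ∀ a b : ℝ,
      0 ≤ a → 0 ≤ b → a + b = 1 →
      φ (a • y₁ + b • y₂) (a • x₁ + b • x₂) ≤ a * φ y₁ x₁ + b * φ y₂ x₂)
    (v : E → ℝ) (hv : ∀ x ∈ P, v x = sInf ((fun y => φ y x) '' X x)) :
    ConvexOn ℝ P v ∧ ∃ K : NNReal, LipschitzOnWith K v P := by
  have hbdd : ∀ x ∈ P, BddBelow ((fun y => φ y x) '' X x) := by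
    rintro x hx
    refine ⟨m, ?_⟩
    rintro z ⟨y, hy, rfl⟩
    exact hm y (hXD x (hPPε hx) hy) x hx
  have hle : ∀ x ∈ P, ∀ y ∈ X x, v x ≤ φ y x := by
    intro x hx y hy
    rw [hv x hx]
    exact csInf_le (hbdd x hx) (mem_image_of_mem _ hy)
  have happ : ∀ x ∈ P, ∀ δ : ℝ, 0 < δ → ∃ y ∈ X x, φ y x < v x + δ := by
    intro x hx δ hδ
    have hne : ((fun y => φ y x) '' X x).Nonempty := (hXne x (hPPε hx)).image _
    have hlt : sInf ((fun y => φ y x) '' X x) < v x + δ := by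
      rw [hv x hx]; exact lt_add_of_pos_right _ hδ
    obtain ⟨z, ⟨y, hy, rfl⟩, hz⟩ := exists_lt_of_csInf_lt hne hlt
    exact ⟨y, hy, hz⟩
  constructor
  · refine ⟨hPconv, ?_⟩
    intro x₁ hx₁ x₂ hx₂ a b ha hb hab
    rw [smul_eq_mul, smul_eq_mul]
    apply le_of_forall_pos_le_add
    intro δ hδ
    obtain ⟨y₁, hy₁, h1⟩ := happ x₁ hx₁ δ hδ
    obtain ⟨y₂, hy₂, h2⟩ := happ x₂ hx₂ δ hδ
    have hxlam : a • x₁ + b • x₂ ∈ P := hPconv hx₁ hx₂ ha hb hab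
    have hylam : a • y₁ + b • y₂ ∈ X (a • x₁ + b • x₂) :=
      hXconv x₁ (hPPε hx₁) x₂ (hPPε hx₂) y₁ hy₁ y₂ hy₂ a b ha hb hab
    have hD1 : y₁ ∈ D := hXD x₁ (hPPε hx₁) hy₁
    have hD2 : y₂ ∈ D := hXD x₂ (hPPε hx₂) hy₂
    have h3 := hφconv y₁ hD1 y₂ hD2 x₁ hx₁ x₂ hx₂ a b ha hb hab
    have h4 := hle _ hxlam _ hylam
    have h1' := mul_le_mul_of_nonneg_left h1.le ha
    have h2' := mul_le_mul_of_nonneg_left h2.le hb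
    have hδ' : a * δ + b * δ = δ := by rw [← add_mul, hab, one_mul]
    nlinarith [h1', h2']
  · rcases P.eq_empty_or_nonempty with rfl | ⟨x₀, hx₀⟩
    · exact ⟨0, by simp⟩
    obtain ⟨y₀, hy₀⟩ := hXne x₀ (hPPε hx₀)
    have hy₀D : y₀ ∈ D := hXD x₀ (hPPε hx₀) hy₀
    have hC0 : 0 ≤ C := by simpa using hC y₀ hy₀D y₀ hy₀D
    set K : ℝ := L * (C / ε + 1) with hKdef
    have hK0 : 0 ≤ K := mul_nonneg hL (by positivity)
    have core : ∀ x ∈ P, ∀ x' ∈ P, v x' ≤ v x + K * ‖x' - x‖ := by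
      intro x hx x' hx'
      apply le_of_forall_pos_le_add
      intro δ hδ
      obtain ⟨y, hy, hyv⟩ := happ x hx δ hδ
      have hyD : y ∈ D := hXD x (hPPε hx) hy
      obtain ⟨y', hy', hnear⟩ : ∃ y' ∈ X x', ‖y' - y‖ ≤ (C / ε) * ‖x' - x‖ := by
        by_cases hxx : x' = x
        · refine ⟨y, hxx ▸ hy, ?_⟩
          simp [hxx, sub_self]
        · set d := ‖x' - x‖ with hdd
          have hd0 : 0 < d := norm_pos_iff.mpr (sub_ne_zero.mpr hxx)
          set x'' := x' + (ε / d) • (x' - x) with hx''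
          have hx''Pε : x'' ∈ Pε := by
            apply hPε x' hx'
            rw [hx'']
            simp only [add_sub_cancel_left]
            rw [norm_smul, Real.norm_eq_abs, abs_of_nonneg (by positivity), ← hdd,
              div_mul_cancel₀ _ hd0.ne']
          obtain ⟨y'', hy''⟩ := hXne x'' hx''Pε
          have hy''D : y'' ∈ D := hXD x'' hx''Pε hy''
          set θ := d / (d + ε) with hθ
          have hθ0 : 0 ≤ θ := by positivity
          have hkey : θ + θ * (ε / d) = 1 := by
            rw [hθ]; field_simp
          have hθ1 : θ ≤ 1 := by
            rw [hθ]
            exact div_le_one_of_le₀ (by linarith) (by positivity)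
          have hxcomb : (1 - θ) • x + θ • x'' = x' := by
            rw [hx'']
            have hmod : (1 - θ) • x + θ • (x' + (ε / d) • (x' - x))
                = x' + (θ + θ * (ε / d) - 1) • (x' - x) := by module
            rw [hmod, hkey]
            simp
          have hy'mem : (1 - θ) • y + θ • y'' ∈ X x' := by
            rw [← hxcomb]
            exact hXconv x (hPPε hx) x'' hx''Pε y hy y'' hy'' (1 - θ) θ
              (by linarith) hθ0 (by ring)
          refine ⟨(1 - θ) • y + θ • y'', hy'mem, ?_⟩
          have hsub : (1 - θ) • y + θ • y'' - y = θ • (y'' - y) := by module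
          rw [hsub, norm_smul, Real.norm_eq_abs, abs_of_nonneg hθ0]
          have hbd : ‖y'' - y‖ ≤ C := hC y'' hy''D y hyD
          have hθd : θ ≤ d / ε := by
            rw [hθ]
            exact div_le_div_of_nonneg_left hd0.le hε (by linarith)
          calc θ * ‖y'' - y‖ ≤ (d / ε) * C :=
                mul_le_mul hθd hbd (norm_nonneg _) (by positivity)
            _ = (C / ε) * d := by ring
      have hy'D : y' ∈ D := hXD x' (hPPε hx') hy'
      have h1 := hle x' hx' y' hy'
      have h2 := hLip y' hy'D y hyD x' hx' x hx
      have h3 : L * (‖y' - y‖ + ‖x' - x‖) ≤ K * ‖x' - x‖ := by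
        have := mul_le_mul_of_nonneg_left hnear hL
        rw [hKdef]
        nlinarith [norm_nonneg (x' - x)]
      linarith
    refine ⟨Real.toNNReal K, ?_⟩
    apply LipschitzOnWith.of_dist_le_mul
    intro x hx x' hx'
    rw [Real.dist_eq, dist_eq_norm, Real.coe_toNNReal _ hK0]
    rw [abs_sub_le_iff]
    refine ⟨by linarith [core x' hx' x hx], ?_⟩
    have h := core x hx x' hx'
    rw [norm_sub_rev x' x] at h
    linarith


/-- Convexity and Lipschitz continuity of the cost-to-go functions of the
deterministic dynamic programming equations (Lemma `convrecfuncQt`). -/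
theorem stmt_10 {n q p : ℕ} (T : ℕ) (hT : 1 ≤ T)
    (x₀ : EuclideanSpace ℝ (Fin n))
    (𝒳 : ℕ → Set (EuclideanSpace ℝ (Fin n)))
    (h𝒳0 : 𝒳 0 = {x₀})
    (h𝒳 : ∀ t, t ≤ T → (𝒳 t).Nonempty ∧ Convex ℝ (𝒳 t) ∧ IsCompact (𝒳 t))
    (S2 : ℕ → Bool)  -- whether the constraint set of stage `t` is of type S2
    (f : ℕ → EuclideanSpace ℝ (Fin n) × EuclideanSpace ℝ (Fin n) → ℝ)
    (g : ℕ → Fin p → EuclideanSpace ℝ (Fin n) × EuclideanSpace ℝ (Fin n) → ℝ)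
    (A B : ℕ → (EuclideanSpace ℝ (Fin n) →L[ℝ] EuclideanSpace ℝ (Fin q)))
    (b : ℕ → EuclideanSpace ℝ (Fin q))
    (ε : ℝ) (hε : 0 < ε)
    -- (H1)-(b): `f t` convex and `C¹` on `𝒳 t ×ˢ 𝒳 (t-1)`
    (hfconv : ∀ t, 1 ≤ t → t ≤ T → ConvexOn ℝ (𝒳 t ×ˢ 𝒳 (t - 1)) (f t))
    (hfC1 : ∀ t, 1 ≤ t → t ≤ T → ContDiffOn ℝ 1 (f t) (𝒳 t ×ˢ 𝒳 (t - 1)))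
    -- (H1)-(c): for type-S2 stages, each `g t i` convex on the fattened set and `C¹`
    (hgconv : ∀ t, 1 ≤ t → t ≤ T → S2 t = true → ∀ i,
      ConvexOn ℝ (𝒳 t ×ˢ {x | ∃ u ∈ 𝒳 (t - 1), ‖x - u‖ ≤ ε}) (g t i))
    (hgC1 : ∀ t, 1 ≤ t → t ≤ T → S2 t = true → ∀ i,
      ContDiffOn ℝ 1 (g t i) (𝒳 t ×ˢ 𝒳 (t - 1)))
    -- the (possibly parameter-dependent) feasible sets
    (Xset : ℕ → EuclideanSpace ℝ (Fin n) → Set (EuclideanSpace ℝ (Fin n)))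
    (hXset : ∀ t x, Xset t x = if S2 t = true then
        {y ∈ 𝒳 t | A t y + B t x = b t ∧ ∀ i, g t i (y, x) ≤ 0}
      else 𝒳 t)
    -- (H1)-(d): relaxed feasibility on the `ε`-fattening of `𝒳 (t-1)`
    (hfeas : ∀ t, 1 ≤ t → t ≤ T → S2 t = true →
      ∀ x ∈ {x | ∃ u ∈ 𝒳 (t - 1), ‖x - u‖ ≤ ε},
        (Xset t x ∩ intrinsicInterior ℝ (𝒳 t)).Nonempty)
    -- the dynamic programming equations
    (Q : ℕ → EuclideanSpace ℝ (Fin n) → ℝ)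
    (hQT : ∀ x, Q (T + 1) x = 0)
    (hQ : ∀ t, 1 ≤ t → t ≤ T → ∀ x,
      Q t x = sInf ((fun y => f t (y, x) + Q (t + 1) y) '' Xset t x)) :
    ∀ t, 2 ≤ t → t ≤ T + 1 →
      ConvexOn ℝ (𝒳 (t - 1)) (Q t) ∧
      ∃ K : NNReal, LipschitzOnWith K (Q t) (𝒳 (t - 1)) := by
  suffices H : ∀ d t, t + d = T + 1 → 1 ≤ t →
      ConvexOn ℝ (𝒳 (t - 1)) (Q t) ∧
      ∃ K : NNReal, LipschitzOnWith K (Q t) (𝒳 (t - 1)) by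
    intro t ht2 htT1
    exact H (T + 1 - t) t (by omega) (by omega)
  intro d
  induction d with
  | zero =>
    intro t htd ht1
    have htt : t = T + 1 := by omega
    subst htt
    have hQT' : Q (T + 1) = fun _ => (0 : ℝ) := funext hQT
    have hXT := h𝒳 T (le_refl T)
    have hidx : T + 1 - 1 = T := by omega
    rw [hidx, hQT']
    exact ⟨convexOn_const 0 hXT.2.1, 0, (LipschitzWith.const (0 : ℝ)).lipschitzOnWith⟩
  | succ d ih =>
    intro t htd ht1
    have htT : t ≤ T := by omega
    have IH := ih (t + 1) (by omega) (by omega)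
    rw [Nat.add_sub_cancel] at IH
    obtain ⟨IHconv, Kq, IHlip⟩ := IH
    obtain ⟨hDne, hDconv, hDcomp⟩ := h𝒳 t htT
    obtain ⟨hPne, hPconv, hPcomp⟩ := h𝒳 (t - 1) (by omega)
    set Pe : Set (EuclideanSpace ℝ (Fin n)) := {x | ∃ u ∈ 𝒳 (t - 1), ‖x - u‖ ≤ ε}
      with hPedef
    -- Lipschitz constant for f t on the product
    obtain ⟨Lf, hLf⟩ := lip_of_C1 (hfC1 t ht1 htT) (hDconv.prod hPconv)
      (hDcomp.prod hPcomp)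
    -- lower bounds
    have hfcont : ContinuousOn (f t) (𝒳 t ×ˢ 𝒳 (t - 1)) := (hfC1 t ht1 htT).continuousOn
    have hqcont : ContinuousOn (Q (t + 1)) (𝒳 t) := IHlip.continuousOn
    obtain ⟨zf, hzf, hzfmin⟩ := (hDcomp.prod hPcomp).exists_isMinOn (hDne.prod hPne) hfcont
    obtain ⟨zq, hzq, hzqmin⟩ := hDcomp.exists_isMinOn hDne hqcont
    obtain ⟨C, hCb⟩ := Metric.isBounded_iff.mp hDcomp.isBounded
    -- hypotheses of `value_fun`
    have hPPe : 𝒳 (t - 1) ⊆ Pe := fun x hx => ⟨x, hx, by simp [hε.le]⟩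
    have hC : ∀ y ∈ 𝒳 t, ∀ y' ∈ 𝒳 t, ‖y - y'‖ ≤ C := by
      intro y hy y' hy'
      rw [← dist_eq_norm]
      exact hCb hy hy'
    have hPe' : ∀ x' ∈ 𝒳 (t - 1), ∀ x : EuclideanSpace ℝ (Fin n), ‖x - x'‖ ≤ ε → x ∈ Pe :=
      fun x' hx' x h => ⟨x', hx', h⟩
    have hXD : ∀ x ∈ Pe, Xset t x ⊆ 𝒳 t := by
      intro x _
      rw [hXset t x]
      split_ifs with h
      · exact fun y hy => hy.1
      · exact subset_rfl
    have hXne : ∀ x ∈ Pe, (Xset t x).Nonempty := by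
      intro x hx
      by_cases h : S2 t = true
      · obtain ⟨y, hy1, _⟩ := hfeas t ht1 htT h x hx
        exact ⟨y, hy1⟩
      · rw [hXset t x, if_neg h]
        exact hDne
    have hXconv : ∀ x₁ ∈ Pe, ∀ x₂ ∈ Pe, ∀ y₁ ∈ Xset t x₁, ∀ y₂ ∈ Xset t x₂, ∀ a b' : ℝ,
        0 ≤ a → 0 ≤ b' → a + b' = 1 →
        a • y₁ + b' • y₂ ∈ Xset t (a • x₁ + b' • x₂) := by
      intro x₁ hx₁ x₂ hx₂ y₁ hy₁ y₂ hy₂ a b' ha hb hab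
      by_cases h : S2 t = true
      · rw [hXset t x₁, if_pos h] at hy₁
        rw [hXset t x₂, if_pos h] at hy₂
        rw [hXset t _, if_pos h]
        refine ⟨hDconv hy₁.1 hy₂.1 ha hb hab, ?_, ?_⟩
        · have e1 : A t (a • y₁ + b' • y₂) = a • A t y₁ + b' • A t y₂ := by
            rw [map_add, map_smul, map_smul]
          have e2 : B t (a • x₁ + b' • x₂) = a • B t x₁ + b' • B t x₂ := by
            rw [map_add, map_smul, map_smul]
          calc A t (a • y₁ + b' • y₂) + B t (a • x₁ + b' • x₂)
              = a • (A t y₁ + B t x₁) + b' • (A t y₂ + B t x₂) := by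
                rw [e1, e2]; module
            _ = a • b t + b' • b t := by rw [hy₁.2.1, hy₂.2.1]
            _ = b t := by rw [← add_smul, hab, one_smul]
        · intro i
          have hgc := (hgconv t ht1 htT h i).2 (Set.mk_mem_prod hy₁.1 hx₁)
            (Set.mk_mem_prod hy₂.1 hx₂) ha hb hab
          simp only [Prod.smul_mk, Prod.mk_add_mk, smul_eq_mul] at hgc
          have g1 := hy₁.2.2 i
          have g2 := hy₂.2.2 i
          have h1 : a * g t i (y₁, x₁) ≤ 0 := mul_nonpos_of_nonneg_of_nonpos ha g1
          have h2 : b' * g t i (y₂, x₂) ≤ 0 := mul_nonpos_of_nonneg_of_nonpos hb g2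
          linarith
      · rw [hXset t x₁, if_neg h] at hy₁
        rw [hXset t x₂, if_neg h] at hy₂
        rw [hXset t _, if_neg h]
        exact hDconv hy₁ hy₂ ha hb hab
    have hm : ∀ y ∈ 𝒳 t, ∀ x ∈ 𝒳 (t - 1),
        f t zf + Q (t + 1) zq ≤ f t (y, x) + Q (t + 1) y :=
      fun y hy x hx => add_le_add (isMinOn_iff.mp hzfmin (y, x) (Set.mk_mem_prod hy hx)) (isMinOn_iff.mp hzqmin y hy)
    have hL : (0 : ℝ) ≤ (Lf : ℝ) + (Kq : ℝ) := add_nonneg Lf.coe_nonneg Kq.coe_nonneg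
    have hLip : ∀ y ∈ 𝒳 t, ∀ y' ∈ 𝒳 t, ∀ x ∈ 𝒳 (t - 1), ∀ x' ∈ 𝒳 (t - 1),
        (f t (y, x) + Q (t + 1) y) - (f t (y', x') + Q (t + 1) y') ≤
          ((Lf : ℝ) + (Kq : ℝ)) * (‖y - y'‖ + ‖x - x'‖) := by
      intro y hy y' hy' x hx x' hx'
      have hd : dist ((y, x) : _ × _) (y', x') ≤ ‖y - y'‖ + ‖x - x'‖ := by
        rw [Prod.dist_eq]
        apply max_le
        · rw [dist_eq_norm]; linarith [norm_nonneg (x - x')]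
        · rw [dist_eq_norm]; linarith [norm_nonneg (y - y')]
      have h1 : f t (y, x) - f t (y', x') ≤ (Lf : ℝ) * (‖y - y'‖ + ‖x - x'‖) := by
        have := hLf.dist_le_mul (y, x) (Set.mk_mem_prod hy hx) (y', x')
          (Set.mk_mem_prod hy' hx')
        rw [Real.dist_eq] at this
        have h2 := mul_le_mul_of_nonneg_left hd Lf.coe_nonneg
        have := le_trans (le_abs_self _) this
        linarith
      have h2 : Q (t + 1) y - Q (t + 1) y' ≤ (Kq : ℝ) * (‖y - y'‖ + ‖x - x'‖) := by
        have := IHlip.dist_le_mul y hy y' hy'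
        rw [Real.dist_eq, dist_eq_norm] at this
        have := le_trans (le_abs_self _) this
        nlinarith [norm_nonneg (x - x'), Kq.coe_nonneg]
      nlinarith [norm_nonneg (y - y'), norm_nonneg (x - x')]
    have hφconv : ∀ y₁ ∈ 𝒳 t, ∀ y₂ ∈ 𝒳 t, ∀ x₁ ∈ 𝒳 (t - 1), ∀ x₂ ∈ 𝒳 (t - 1), ∀ a b' : ℝ,
        0 ≤ a → 0 ≤ b' → a + b' = 1 →
        (f t (a • y₁ + b' • y₂, a • x₁ + b' • x₂) + Q (t + 1) (a • y₁ + b' • y₂)) ≤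
          a * (f t (y₁, x₁) + Q (t + 1) y₁) + b' * (f t (y₂, x₂) + Q (t + 1) y₂) := by
      intro y₁ hy₁ y₂ hy₂ x₁ hx₁ x₂ hx₂ a b' ha hb hab
      have hf' : f t (a • y₁ + b' • y₂, a • x₁ + b' • x₂) ≤
          a * f t (y₁, x₁) + b' * f t (y₂, x₂) := by
        have := (hfconv t ht1 htT).2 (Set.mk_mem_prod hy₁ hx₁) (Set.mk_mem_prod hy₂ hx₂)
          ha hb hab
        simpa [Prod.smul_mk, Prod.mk_add_mk, smul_eq_mul] using this
      have hq' : Q (t + 1) (a • y₁ + b' • y₂) ≤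
          a * Q (t + 1) y₁ + b' * Q (t + 1) y₂ := by
        have := IHconv.2 hy₁ hy₂ ha hb hab
        simpa [smul_eq_mul] using this
      nlinarith
    have hv : ∀ x ∈ 𝒳 (t - 1), Q t x =
        sInf ((fun y => f t (y, x) + Q (t + 1) y) '' Xset t x) :=
      fun x _ => hQ t ht1 htT x
    exact value_fun (𝒳 t) (𝒳 (t - 1)) Pe hPconv hPPe C hC ε hε hPe' (Xset t) hXD hXne
      hXconv (fun y x => f t (y, x) + Q (t + 1) y) (f t zf + Q (t + 1) zq) hm
      ((Lf : ℝ) + (Kq : ℝ)) hL hLip hφconv (Q t) hv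
end

section
/- Let $X \subset \mathbb{R}^m$, $Y \subset \mathbb{R}^n$ be nonempty compact convex sets, $f \in C^1(Y \times X)$ convex on $Y \times X$, and $(\mathcal{Q}^k)_{k \ge 1}$ a sequence of convex $L$-Lipschitz functions on $Y$ with $\underline{\mathcal{Q}} \le \mathcal{Q}^k \le \bar{\mathcal{Q}}$ for continuous $\underline{\mathcal{Q}}, \bar{\mathcal{Q}}$ on $Y$. Let $(x^k) \subset X$, $(\varepsilon^k) \subset \mathbb{R}_{\ge 0}$ with $\varepsilon^k \to 0$, and let $y^k \in Y$ be an $\varepsilon^k$-optimal solution of $\inf\{f(y, x^k) + \mathcal{Q}^k(y) : y \in Y\}$. Define $\eta^k = \max_{y \in Y} \big[\langle \nabla_y f(y^k, x^k), y^k - y\rangle + \mathcal{Q}^k(y^k) - \mathcal{Q}^k(y)\big]$. Then $\lim_{k \to \infty} \eta^k = 0$. -/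
open Set Filter
open scoped RealInnerProductSpace Topology


lemma grad_ineq {E : Type*} [NormedAddCommGroup E] [NormedSpace ℝ E]
    {s : Set E} {f : E → ℝ} (hf : ConvexOn ℝ s f) {a b : E}
    (ha : a ∈ s) (hb : b ∈ s) {D : E →L[ℝ] ℝ} (hd : HasFDerivAt f D a) :
    f a + D (b - a) ≤ f b := by
  set g : ℝ → ℝ := fun t => f (a + t • (b - a)) with hg
  have hmem : ∀ t ∈ Icc (0:ℝ) 1, a + t • (b - a) ∈ s := by
    intro t ht
    have h := hf.1 ha hb (by linarith [ht.1, ht.2] : (0:ℝ) ≤ 1 - t) ht.1 (by ring)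
    have heq : a + t • (b - a) = (1 - t) • a + t • b := by module
    rw [heq]; exact h
  have hgc : ConvexOn ℝ (Icc (0:ℝ) 1) g := by
    have h2 : ConvexOn ℝ (Icc (0:ℝ) 1) (f ∘ (AffineMap.lineMap a b)) :=
      (hf.comp_affineMap (AffineMap.lineMap a b)).subset
        (fun t ht => by
          simp only [mem_preimage, AffineMap.lineMap_apply_module]
          have heq : (1 - t) • a + t • b = a + t • (b - a) := by module
          rw [heq]; exact hmem t ht)
        (convex_Icc 0 1)
    convert h2 using 1
    funext t
    simp only [hg, Function.comp_apply, AffineMap.lineMap_apply_module]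
    have heq : a + t • (b - a) = (1 - t) • a + t • b := by module
    rw [heq]
  have hgd : HasDerivAt g (D (b - a)) 0 := by
    have h1 : HasDerivAt (fun t : ℝ => a + t • (b - a)) (b - a) 0 := by
      simpa using ((hasDerivAt_id (0:ℝ)).smul_const (b - a)).const_add a
    have hd' : HasFDerivAt f D (a + (0:ℝ) • (b - a)) := by simpa using hd
    exact hd'.comp_hasDerivAt 0 h1
  have := hgc.le_slope_of_hasDerivAt (left_mem_Icc.2 zero_le_one) (right_mem_Icc.2 zero_le_one)
    zero_lt_one hgd
  have hs : slope g 0 1 = f b - f a := by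
    simp [slope_def_field, hg]
  rw [hs] at this
  linarith

/-- Vanishing-error lemma for fixed feasible sets (Proposition `propvanish1`). -/
theorem stmt_11 {n m : ℕ}
    (X : Set (EuclideanSpace ℝ (Fin m))) (Y : Set (EuclideanSpace ℝ (Fin n)))
    (hXne : X.Nonempty) (hXcv : Convex ℝ X) (hXcp : IsCompact X)
    (hYne : Y.Nonempty) (hYcv : Convex ℝ Y) (hYcp : IsCompact Y)
    (f : EuclideanSpace ℝ (Fin n) × EuclideanSpace ℝ (Fin m) → ℝ)
    (Gy : EuclideanSpace ℝ (Fin n) × EuclideanSpace ℝ (Fin m) → EuclideanSpace ℝ (Fin n))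
    (Gx : EuclideanSpace ℝ (Fin n) × EuclideanSpace ℝ (Fin m) → EuclideanSpace ℝ (Fin m))
    (D : EuclideanSpace ℝ (Fin n) × EuclideanSpace ℝ (Fin m) →
         EuclideanSpace ℝ (Fin n) × EuclideanSpace ℝ (Fin m) →L[ℝ] ℝ)
    (hconv : ConvexOn ℝ (Y ×ˢ X) f)
    (hdiff : ∀ z ∈ Y ×ˢ X, HasFDerivAt f (D z) z)
    (hgrad : ∀ z ∈ Y ×ˢ X, ∀ v, D z v = ⟪Gy z, v.1⟫ + ⟪Gx z, v.2⟫)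
    (hC1 : ContinuousOn Gy (Y ×ˢ X))  -- `f ∈ C¹(Y × X)`
    -- the sequence of convex `L`-Lipschitz sandwiched functions
    (L : NNReal) (Qk : ℕ → EuclideanSpace ℝ (Fin n) → ℝ)
    (hQkconv : ∀ k, ConvexOn ℝ Y (Qk k))
    (hQkLip : ∀ k, LipschitzOnWith L (Qk k) Y)
    (Qlo Qhi : EuclideanSpace ℝ (Fin n) → ℝ)
    (hQlo : ContinuousOn Qlo Y) (hQhi : ContinuousOn Qhi Y)
    (hsand : ∀ k, ∀ y ∈ Y, Qlo y ≤ Qk k y ∧ Qk k y ≤ Qhi y)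
    -- the iterates
    (x : ℕ → EuclideanSpace ℝ (Fin m)) (hx : ∀ k, x k ∈ X)
    (εk : ℕ → ℝ) (hεk : ∀ k, 0 ≤ εk k) (hεk0 : Tendsto εk atTop (𝓝 0))
    (y : ℕ → EuclideanSpace ℝ (Fin n)) (hy : ∀ k, y k ∈ Y)
    (hyopt : ∀ k, ∀ z ∈ Y, f (y k, x k) + Qk k (y k) ≤ f (z, x k) + Qk k z + εk k)
    (η : ℕ → ℝ)
    (hη : ∀ k, IsGreatest
      ((fun z => ⟪Gy (y k, x k), y k - z⟫ + Qk k (y k) - Qk k z) '' Y) (η k)) :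
    Tendsto η atTop (𝓝 0) := by

  have hnonneg : ∀ k, 0 ≤ η k := fun k => (hη k).2 ⟨y k, hy k, by simp⟩
  -- diameter bound for Y
  obtain ⟨C, hC⟩ := Metric.isBounded_iff.mp hYcp.isBounded
  set R : ℝ := max C 0 with hR
  have hR0 : 0 ≤ R := le_max_right _ _
  have hdiam : ∀ a ∈ Y, ∀ b ∈ Y, dist a b ≤ R := fun a ha b hb =>
    le_trans (hC ha hb) (le_max_left _ _)
  -- uniform continuity of Gy on Y ×ˢ X
  have hUC := Metric.uniformContinuousOn_iff.mp
    ((hYcp.prod hXcp).uniformContinuousOn_of_continuous hC1)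
  rw [Metric.tendsto_atTop]
  intro ε hε
  -- choose ρ and δ from uniform continuity
  set ρ : ℝ := ε / (2 * (R + 1)) with hρ
  have hρ0 : 0 < ρ := by positivity
  obtain ⟨δ, hδ0, hδ⟩ := hUC ρ hρ0
  -- choose t
  set t : ℝ := min 1 (δ / (2 * (R + 1))) with ht
  have ht0 : 0 < t := lt_min one_pos (by positivity)
  have ht1 : t ≤ 1 := min_le_left _ _
  have htR : t * R < δ := by
    have h1 : t ≤ δ / (2 * (R + 1)) := min_le_right _ _
    have h2 : t * R ≤ δ / (2 * (R + 1)) * R :=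
      mul_le_mul_of_nonneg_right h1 hR0
    have h3 : δ / (2 * (R + 1)) * R < δ := by
      rw [div_mul_eq_mul_div, div_lt_iff₀ (by positivity)]
      nlinarith
    linarith
  have hρR : ρ * R ≤ ε / 2 := by
    rw [hρ, div_mul_eq_mul_div, div_le_div_iff₀ (by positivity) (by positivity)]
    nlinarith
  -- eventually εk k < t * (ε / 2)
  obtain ⟨N, hN⟩ := (Metric.tendsto_atTop.mp hεk0) (t * (ε / 2)) (by positivity)
  refine ⟨N, fun k hk => ?_⟩
  have hεsmall : εk k < t * (ε / 2) := by
    have := hN k hk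
    rw [Real.dist_eq, abs_sub_comm, abs_of_nonpos (by linarith [hεk k])] at this
    linarith
  rw [Real.dist_eq, sub_zero, abs_of_nonneg (hnonneg k)]
  -- now bound η k
  obtain ⟨z, hz, hzval⟩ := (hη k).1
  rw [← hzval]
  beta_reduce
  set w : EuclideanSpace ℝ (Fin n) := (1 - t) • (y k) + t • z with hw
  have hwY : w ∈ Y := hYcv (hy k) hz (by linarith) ht0.le (by ring)
  have hmemW : (w, x k) ∈ Y ×ˢ X := ⟨hwY, hx k⟩
  -- (A) ε-optimality + convexity of Qk
  have hopt := hyopt k w hwY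
  have hQcv : Qk k w ≤ (1 - t) * Qk k (y k) + t * Qk k z :=
    (hQkconv k).2 (hy k) hz (by linarith) ht0.le (by ring)
  -- (B) gradient inequality at (w, x k)
  have hgi := grad_ineq hconv hmemW (Set.mk_mem_prod (hy k) (hx k)) (hdiff _ hmemW)
  have hsub : (y k, x k) - (w, x k) = (t • (y k - z), (0 : EuclideanSpace ℝ (Fin m))) := by
    rw [Prod.mk_sub_mk, sub_self]
    congr 1
    rw [hw]; module
  have hD : D (w, x k) ((y k, x k) - (w, x k)) = t * ⟪Gy (w, x k), y k - z⟫ := by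
    rw [hgrad _ hmemW, hsub]
    simp only [inner_zero_right, add_zero, real_inner_smul_right]
  rw [hD] at hgi
  -- (C) inner product difference bound via uniform continuity
  have hdistw : dist ((y k, x k) : EuclideanSpace ℝ (Fin n) × EuclideanSpace ℝ (Fin m))
      (w, x k) < δ := by
    rw [Prod.dist_eq]
    simp only [dist_self, max_eq_left dist_nonneg]
    have : y k - w = t • (y k - z) := by rw [hw]; module
    rw [dist_eq_norm, this, norm_smul, Real.norm_eq_abs, abs_of_pos ht0]
    calc t * ‖y k - z‖ ≤ t * R := by
          have := hdiam (y k) (hy k) z hz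
          rw [dist_eq_norm] at this
          exact mul_le_mul_of_nonneg_left this ht0.le
      _ < δ := htR
  have hGyclose : ‖Gy (y k, x k) - Gy (w, x k)‖ < ρ := by
    have := hδ _ (Set.mk_mem_prod (hy k) (hx k)) _ hmemW hdistw
    rwa [dist_eq_norm] at this
  have hinner : ⟪Gy (y k, x k) - Gy (w, x k), y k - z⟫ ≤ ρ * R := by
    calc ⟪Gy (y k, x k) - Gy (w, x k), y k - z⟫
        ≤ ‖Gy (y k, x k) - Gy (w, x k)‖ * ‖y k - z‖ := real_inner_le_norm _ _
      _ ≤ ρ * R := by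
          have h1 := hdiam (y k) (hy k) z hz
          rw [dist_eq_norm] at h1
          exact mul_le_mul hGyclose.le h1 (norm_nonneg _) hρ0.le
  have hinner' : ⟪Gy (y k, x k), y k - z⟫ - ⟪Gy (w, x k), y k - z⟫ ≤ ρ * R := by
    rwa [← inner_sub_left]
  -- assemble: t * (value at z) ≤ t * (ρ * R) + εk k
  have hkey : t * (⟪Gy (y k, x k), y k - z⟫ + Qk k (y k) - Qk k z) ≤ t * (ρ * R) + εk k := by
    nlinarith
  have hfin : t * (⟪Gy (y k, x k), y k - z⟫ + Qk k (y k) - Qk k z) < t * ε := by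
    have : t * (ρ * R) ≤ t * (ε / 2) := mul_le_mul_of_nonneg_left hρR ht0.le
    nlinarith
  exact lt_of_mul_lt_mul_left (by linarith) ht0.le
end
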